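/- arXiv:math/0304377 — 6 statements merged into one kernel-verified Lean document; each statement's English description precedes it below -/
import Mathlib

section
/- (von Staudt–Clausen) For every positive integer $n$, the rational number $B_{2n} + \sum_{p-1 \mid 2n} \frac{1}{p}$ is an integer, where the sum is over primes $p$ with $p-1$ dividing $2n$. -/
open Finset

/-- `vscU m k = ∑_{j=0}^{k} (-1)^j C(k,j) j^m`. -/
def vscU (m k : ℕ) : ℤ := ∑ j ∈ range (k + 1), (-1) ^ j * (k.choose j) * (j : ℤ) ^ m

lemma vscU_zero (k : ℕ) : vscU 0 k = if k = 0 then 1 else 0 := by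
  simpa [vscU] using Int.alternating_sum_range_choose (n := k)

lemma vscU_succ_col (m k : ℕ) :
    vscU m (k + 1) =
      vscU m k - ∑ j ∈ range (k + 1), (-1 : ℤ) ^ j * (k.choose j) * ((j : ℤ) + 1) ^ m := by
  have e1 : vscU m (k + 1) =
      ∑ i ∈ range (k + 1), (-1 : ℤ) ^ (i + 1) * (((k + 1).choose (i + 1) : ℤ)) * ((i : ℤ) + 1) ^ m
        + (0 : ℤ) ^ m := by
    rw [vscU]
    rw [Finset.sum_range_succ' (fun j => (-1 : ℤ) ^ j * ((k + 1).choose j : ℤ) * (j : ℤ) ^ m) (k + 1)]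
    simp
  have e2 : ∀ i, (((k + 1).choose (i + 1) : ℤ)) = (k.choose i : ℤ) + (k.choose (i + 1) : ℤ) := by
    intro i; rw [Nat.choose_succ_succ]; push_cast; ring
  rw [e1]
  have e3 : ∑ i ∈ range (k + 1), (-1 : ℤ) ^ (i + 1) * (((k + 1).choose (i + 1) : ℤ)) * ((i : ℤ) + 1) ^ m
      = (∑ i ∈ range (k + 1), (-1 : ℤ) ^ (i + 1) * (k.choose i : ℤ) * ((i : ℤ) + 1) ^ m)
        + ∑ i ∈ range (k + 1), (-1 : ℤ) ^ (i + 1) * (k.choose (i + 1) : ℤ) * ((i : ℤ) + 1) ^ m := by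
    rw [← Finset.sum_add_distrib]
    refine Finset.sum_congr rfl fun i _ => ?_
    rw [e2]; ring
  rw [e3]
  have e4 : ∑ i ∈ range (k + 1), (-1 : ℤ) ^ (i + 1) * (k.choose (i + 1) : ℤ) * ((i : ℤ) + 1) ^ m
      = vscU m k - (0 : ℤ) ^ m := by
    have h5 : vscU m k = ∑ i ∈ range (k + 1), (-1 : ℤ) ^ (i + 1) * (k.choose (i + 1) : ℤ) * (((i : ℤ)) + 1) ^ m + (0 : ℤ) ^ m := by
      rw [vscU]
      have := Finset.sum_range_succ' (fun j => (-1 : ℤ) ^ j * (k.choose j : ℤ) * (j : ℤ) ^ m) k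
      -- range (k+1) = range k, f (i+1), + f 0 ; but we need range (k+1) on the shifted sum
      rw [this]
      have h6 : ∑ i ∈ range (k + 1), (-1 : ℤ) ^ (i + 1) * (k.choose (i + 1) : ℤ) * ((i : ℤ) + 1) ^ m
          = ∑ i ∈ range k, (-1 : ℤ) ^ (i + 1) * (k.choose (i + 1) : ℤ) * ((i : ℤ) + 1) ^ m := by
        rw [Finset.sum_range_succ, Nat.choose_succ_self]
        push_cast; ring
      rw [h6]
      simp
    rw [h5]; ring
  rw [e4]
  have e5 : ∑ i ∈ range (k + 1), (-1 : ℤ) ^ (i + 1) * (k.choose i : ℤ) * ((i : ℤ) + 1) ^ m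
      = - ∑ j ∈ range (k + 1), (-1 : ℤ) ^ j * (k.choose j : ℤ) * ((j : ℤ) + 1) ^ m := by
    rw [← Finset.sum_neg_distrib]
    refine Finset.sum_congr rfl fun i _ => ?_
    ring
  rw [e5]; ring

lemma vscU_succ_row (m k : ℕ) :
    vscU (m + 1) (k + 1) = (k + 1) * (vscU m (k + 1) - vscU m k) := by
  have e1 : vscU (m + 1) (k + 1) =
      ∑ i ∈ range (k + 1), (-1 : ℤ) ^ (i + 1) * (((k + 1).choose (i + 1) : ℤ)) * ((i : ℤ) + 1) ^ (m + 1) := by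
    rw [vscU]
    rw [Finset.sum_range_succ' (fun j => (-1 : ℤ) ^ j * ((k + 1).choose j : ℤ) * (j : ℤ) ^ (m + 1)) (k + 1)]
    simp
  have e2 : ∀ i : ℕ, (((k + 1).choose (i + 1) : ℤ)) * ((i : ℤ) + 1) = (k + 1) * (k.choose i : ℤ) := by
    intro i
    have := Nat.add_one_mul_choose_eq k i
    have h := congrArg (fun x : ℕ => (x : ℤ)) this
    push_cast at h
    linarith [h]
  have e3 : vscU (m + 1) (k + 1)
      = -((k + 1) * ∑ i ∈ range (k + 1), (-1 : ℤ) ^ i * (k.choose i : ℤ) * ((i : ℤ) + 1) ^ m) := by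
    rw [e1, Finset.mul_sum, ← Finset.sum_neg_distrib]
    refine Finset.sum_congr rfl fun i _ => ?_
    have : ((i : ℤ) + 1) ^ (m + 1) = ((i : ℤ) + 1) ^ m * ((i : ℤ) + 1) := by ring
    rw [this]
    have := e2 i
    calc (-1 : ℤ) ^ (i + 1) * ((k + 1).choose (i + 1) : ℤ) * (((i : ℤ) + 1) ^ m * ((i : ℤ) + 1))
        = (-1 : ℤ) ^ (i + 1) * (((k + 1).choose (i + 1) : ℤ) * ((i : ℤ) + 1)) * ((i : ℤ) + 1) ^ m := by ring
      _ = (-1 : ℤ) ^ (i + 1) * ((k + 1) * (k.choose i : ℤ)) * ((i : ℤ) + 1) ^ m := by rw [e2]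
      _ = -((k + 1) * ((-1 : ℤ) ^ i * (k.choose i : ℤ) * ((i : ℤ) + 1) ^ m)) := by ring
  rw [e3]
  have := vscU_succ_col m k
  have e4 : ∑ i ∈ range (k + 1), (-1 : ℤ) ^ i * (k.choose i : ℤ) * ((i : ℤ) + 1) ^ m
      = vscU m k - vscU m (k + 1) := by linarith [this]
  rw [e4]; ring

lemma vscU_eq_zero_of_lt : ∀ m k, m < k → vscU m k = 0 := by
  intro m
  induction m with
  | zero => intro k hk; rw [vscU_zero, if_neg (by omega)]
  | succ m ih =>
    intro k hk
    obtain ⟨k', rfl⟩ : ∃ k', k = k' + 1 := ⟨k - 1, by omega⟩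
    rw [vscU_succ_row, ih k' (by omega), ih (k' + 1) (by omega)]
    ring

lemma factorial_dvd_vscU : ∀ m k, (k.factorial : ℤ) ∣ vscU m k := by
  intro m
  induction m with
  | zero =>
    intro k; rw [vscU_zero]
    rcases eq_or_ne k 0 with rfl | h
    · simp
    · simp [h]
  | succ m ih =>
    intro k
    cases k with
    | zero => simp [vscU]
    | succ k' =>
      rw [vscU_succ_row]
      have h1 : (k'.factorial : ℤ) ∣ vscU m (k' + 1) :=
        dvd_trans (by exact_mod_cast Nat.factorial_dvd_factorial (Nat.le_succ k')) (ih (k' + 1))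
      have h2 : (k'.factorial : ℤ) ∣ vscU m (k' + 1) - vscU m k' := dvd_sub h1 (ih k')
      have : ((k' + 1).factorial : ℤ) = (k' + 1) * (k'.factorial : ℤ) := by
        rw [Nat.factorial_succ]; push_cast; ring
      rw [this]
      exact mul_dvd_mul_left _ h2

lemma vsc_telescope (n : ℕ) :
    ∑ r ∈ range (n + 1), (vscU (n + 1) (r + 1) : ℚ) / (r + 1) = if n = 0 then -1 else 0 := by
  have e1 : ∀ r : ℕ, (vscU (n + 1) (r + 1) : ℚ) / (r + 1)
      = (vscU n (r + 1) : ℚ) - (vscU n r : ℚ) := by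
    intro r
    rw [vscU_succ_row]
    push_cast
    rw [mul_div_assoc]
    have : ((r : ℚ) + 1) ≠ 0 := by positivity
    field_simp
  calc ∑ r ∈ range (n + 1), (vscU (n + 1) (r + 1) : ℚ) / (r + 1)
      = ∑ r ∈ range (n + 1), ((vscU n (r + 1) : ℚ) - (vscU n r : ℚ)) :=
        Finset.sum_congr rfl fun r _ => e1 r
    _ = (vscU n (n + 1) : ℚ) - (vscU n 0 : ℚ) := Finset.sum_range_sub (fun r => (vscU n r : ℚ)) (n + 1)
    _ = if n = 0 then -1 else 0 := by
        rw [vscU_eq_zero_of_lt n (n + 1) (by omega)]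
        have : vscU n 0 = (0 : ℤ) ^ n := by simp [vscU]
        rw [this]
        rcases eq_or_ne n 0 with rfl | h
        · norm_num
        · rw [zero_pow h, if_neg h]; norm_num

/-- The candidate formula for Bernoulli numbers. -/
def vscB (m : ℕ) : ℚ := ∑ r ∈ range (m + 1), (vscU m r : ℚ) / (r + 1)

lemma vscB_eq_extended {m n : ℕ} (h : m < n) :
    vscB m = ∑ r ∈ range n, (vscU m r : ℚ) / (r + 1) := by
  rw [vscB]
  refine Finset.sum_subset ?_ ?_
  · exact Finset.range_subset_range.2 (by omega)
  · intro r _ hr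
    rw [Finset.mem_range, not_lt] at hr
    rw [vscU_eq_zero_of_lt m r (by omega)]
    simp

lemma vscU_cast (m k : ℕ) :
    (vscU m k : ℚ) = ∑ j ∈ range (k + 1), (-1 : ℚ) ^ j * (k.choose j) * (j : ℚ) ^ m := by
  rw [vscU]; push_cast; rfl

lemma binom_sum (N : ℕ) (x : ℚ) :
    ∑ k ∈ range (N + 1), ((N+1).choose k : ℚ) * x ^ k = (x + 1) ^ (N + 1) - x ^ (N + 1) := by
  have h := add_pow x 1 (N + 1)
  simp only [one_pow, mul_one] at h
  rw [Finset.sum_range_succ] at h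
  simp only [Nat.choose_self, Nat.cast_one, mul_one] at h
  have : ∑ k ∈ range (N + 1), ((N+1).choose k : ℚ) * x ^ k
      = ∑ k ∈ range (N + 1), x ^ k * ((N+1).choose k : ℚ) := by
    refine Finset.sum_congr rfl fun k _ => ?_; ring
  rw [this]; linarith [h]

lemma vscU_succ_col_cast (m k : ℕ) :
    ∑ j ∈ range (k + 1), (-1 : ℚ) ^ j * (k.choose j : ℚ) * ((j : ℚ) + 1) ^ m
      = (vscU m k : ℚ) - (vscU m (k + 1) : ℚ) := by
  have h := vscU_succ_col m k
  have h2 : (vscU m (k+1) : ℚ) = (vscU m k : ℚ) -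
      ((∑ j ∈ range (k + 1), (-1 : ℤ) ^ j * (k.choose j) * ((j : ℤ) + 1) ^ m : ℤ) : ℚ) := by
    exact_mod_cast congrArg (fun z : ℤ => (z : ℚ)) h
  push_cast at h2
  linarith [h2]

lemma sum_choose_vscB (n : ℕ) :
    ∑ k ∈ range n, (n.choose k : ℚ) * vscB k = if n = 1 then 1 else 0 := by
  cases n with
  | zero => simp
  | succ N =>
    have key : ∀ k ∈ range (N + 1), (↑((N+1).choose k) : ℚ) * vscB k
        = ∑ r ∈ range (N + 1), (↑((N+1).choose k) : ℚ) * ((vscU k r : ℚ) / (r + 1)) := by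
      intro k hk
      rw [Finset.mem_range] at hk
      rw [vscB_eq_extended hk, Finset.mul_sum]
    rw [Finset.sum_congr rfl key, Finset.sum_comm]
    have inner : ∀ r ∈ range (N + 1),
        ∑ k ∈ range (N + 1), (↑((N+1).choose k) : ℚ) * ((vscU k r : ℚ) / (r + 1))
          = -((vscU (N + 1) (r + 1) : ℚ) / (r + 1)) := by
      intro r _
      have e1 : ∑ k ∈ range (N + 1), (↑((N+1).choose k) : ℚ) * (vscU k r : ℚ)
          = -(vscU (N + 1) (r + 1) : ℚ) := by
        have swap : ∑ k ∈ range (N + 1), (↑((N+1).choose k) : ℚ) * (vscU k r : ℚ)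
            = ∑ j ∈ range (r + 1), (-1 : ℚ) ^ j * (r.choose j : ℚ) *
                (∑ k ∈ range (N + 1), (↑((N+1).choose k) : ℚ) * (j : ℚ) ^ k) := by
          simp_rw [vscU_cast, Finset.mul_sum]
          rw [Finset.sum_comm]
          refine Finset.sum_congr rfl fun j _ => ?_
          refine Finset.sum_congr rfl fun k _ => ?_
          ring
        rw [swap]
        have e2 : ∑ j ∈ range (r + 1), (-1 : ℚ) ^ j * (r.choose j : ℚ) *
              (((j : ℚ) + 1) ^ (N + 1) - (j : ℚ) ^ (N + 1))
            = (∑ j ∈ range (r + 1), (-1 : ℚ) ^ j * (r.choose j : ℚ) * ((j : ℚ) + 1) ^ (N + 1))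
              - ∑ j ∈ range (r + 1), (-1 : ℚ) ^ j * (r.choose j : ℚ) * (j : ℚ) ^ (N + 1) := by
          rw [← Finset.sum_sub_distrib]
          refine Finset.sum_congr rfl fun j _ => ?_
          ring
        calc ∑ j ∈ range (r + 1), (-1 : ℚ) ^ j * (r.choose j : ℚ) *
              (∑ k ∈ range (N + 1), (↑((N+1).choose k) : ℚ) * (j : ℚ) ^ k)
            = ∑ j ∈ range (r + 1), (-1 : ℚ) ^ j * (r.choose j : ℚ) *
              (((j : ℚ) + 1) ^ (N + 1) - (j : ℚ) ^ (N + 1)) := by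
              refine Finset.sum_congr rfl fun j _ => ?_
              rw [binom_sum]
          _ = ((vscU (N + 1) r : ℚ) - (vscU (N + 1) (r + 1) : ℚ)) - (vscU (N + 1) r : ℚ) := by
              rw [e2, vscU_succ_col_cast, vscU_cast]
          _ = -(vscU (N + 1) (r + 1) : ℚ) := by ring
      calc ∑ k ∈ range (N + 1), (↑((N+1).choose k) : ℚ) * ((vscU k r : ℚ) / (r + 1))
          = (∑ k ∈ range (N + 1), (↑((N+1).choose k) : ℚ) * (vscU k r : ℚ)) / (r + 1) := by
            rw [Finset.sum_div]
            refine Finset.sum_congr rfl fun k _ => ?_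
            ring
        _ = -((vscU (N + 1) (r + 1) : ℚ) / (r + 1)) := by rw [e1]; ring
    rw [Finset.sum_congr rfl inner, Finset.sum_neg_distrib, vsc_telescope]
    rcases eq_or_ne N 0 with rfl | h
    · norm_num
    · rw [if_neg h, if_neg (by omega)]; norm_num

lemma bernoulli_eq_vscB : ∀ m : ℕ, bernoulli m = vscB m := by
  intro m
  induction m using Nat.strong_induction_on with
  | _ m ih =>
    have h1 := sum_bernoulli (m + 1)
    have h2 := sum_choose_vscB (m + 1)
    rw [Finset.sum_range_succ] at h1 h2
    have h3 : ∑ k ∈ range m, ((m+1).choose k : ℚ) * bernoulli k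
        = ∑ k ∈ range m, ((m+1).choose k : ℚ) * vscB k := by
      refine Finset.sum_congr rfl fun k hk => ?_
      rw [Finset.mem_range] at hk
      rw [ih k hk]
    have h4 : ((m+1).choose m : ℚ) * bernoulli m = ((m+1).choose m : ℚ) * vscB m := by
      rw [← h2, ← h3] at h1
      linarith [h1]
    have h5 : ((m+1).choose m : ℚ) ≠ 0 := by
      rw [Nat.choose_succ_self_right]
      positivity
    exact mul_left_cancel₀ h5 h4

lemma vsc_aux_fact {a b : ℕ} (h2 : 2 ≤ a) (hab : a < b) : a * b ∣ (a * b - 1).factorial := by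
  have hb1 : 1 ≤ b := by omega
  have hdvd1 : a ∣ (b - 1).factorial := Nat.dvd_factorial (by omega) (by omega)
  have hdvd2 : a * b ∣ b.factorial := by
    rw [← Nat.mul_factorial_pred (by omega : b ≠ 0)]
    rw [mul_comm a b]
    exact mul_dvd_mul_left b hdvd1
  refine hdvd2.trans (Nat.factorial_dvd_factorial ?_)
  have : 2 * b ≤ a * b := Nat.mul_le_mul_right b h2
  omega

lemma vsc_comp_dvd_fact {q : ℕ} (h2 : 2 ≤ q) (hnp : ¬ q.Prime) (h4 : q ≠ 4) :
    q ∣ (q - 1).factorial := by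
  obtain ⟨a, ha, ha2, haq⟩ := Nat.exists_dvd_of_not_prime2 h2 hnp
  obtain ⟨b, rfl⟩ := ha
  have hb2 : 2 ≤ b := by
    rcases Nat.lt_or_ge b 2 with h | h
    · interval_cases b <;> omega
    · exact h
  rcases Nat.lt_trichotomy a b with h | h | h
  · exact vsc_aux_fact ha2 h
  · -- a = b, square case
    subst h
    have ha3 : 3 ≤ a := by
      rcases Nat.lt_or_ge a 3 with h | h
      · interval_cases a <;> omega
      · exact h
    have hd : a * a ∣ (2 * a).factorial := by
      have e : (2 * a).factorial = (2 * a) * (2 * a - 1).factorial :=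
        (Nat.mul_factorial_pred (by omega)).symm
      rw [e]
      exact mul_dvd_mul ⟨2, by ring⟩ (Nat.dvd_factorial (by omega) (by omega))
    refine hd.trans (Nat.factorial_dvd_factorial ?_)
    have : 3 * a ≤ a * a := Nat.mul_le_mul_right a ha3
    omega
  · rw [mul_comm]
    exact vsc_aux_fact hb2 h

lemma vsc_choose_mod {p : ℕ} (hp : p.Prime) :
    ∀ j, j ≤ p - 1 → (((p - 1).choose j : ℕ) : ZMod p) = (-1) ^ j := by
  haveI : Fact p.Prime := ⟨hp⟩
  intro j
  induction j with
  | zero => intro _; simp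
  | succ j ih =>
    intro hj
    have hj' : j ≤ p - 1 := by omega
    have key := Nat.choose_succ_right_eq (p - 1) j
    have hkey : ((((p-1).choose (j+1)) * (j+1) : ℕ) : ZMod p)
        = (((p-1).choose j * (p - 1 - j) : ℕ) : ZMod p) := by exact_mod_cast congrArg _ key
    push_cast at hkey
    have hsub : ((p - 1 - j : ℕ) : ZMod p) = -((j : ZMod p) + 1) := by
      have h1 : ((p - 1 - j : ℕ) : ZMod p) = ((p - 1 : ℕ) : ZMod p) - (j : ZMod p) := by
        rw [Nat.cast_sub hj']
      have h2 : ((p - 1 : ℕ) : ZMod p) = -1 := by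
        rw [Nat.cast_sub hp.one_le, ZMod.natCast_self]
        ring
      rw [h1, h2]; ring
    have hunit : ((j : ZMod p) + 1) ≠ 0 := by
      have : (((j + 1 : ℕ)) : ZMod p) ≠ 0 := by
        rw [Ne, ZMod.natCast_eq_zero_iff]
        intro hdvd
        have := Nat.le_of_dvd (by omega) hdvd
        omega
      push_cast at this
      exact this
    apply mul_right_cancel₀ hunit
    rw [hkey, hsub, ih hj']
    ring

lemma vsc_sum_range_pow {p : ℕ} (hp : p.Prime) {m : ℕ} (hm : 1 ≤ m) :
    ∑ j ∈ range p, ((j : ZMod p)) ^ m = if (p - 1) ∣ m then -1 else 0 := by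
  haveI : Fact p.Prime := ⟨hp⟩
  haveI : NeZero p := ⟨hp.pos.ne'⟩
  classical
  have hu := FiniteField.sum_pow_units (ZMod p) m
  rw [ZMod.card] at hu
  rw [← hu]
  have h1 : ∑ j ∈ range p, ((j : ZMod p)) ^ m = ∑ x : ZMod p, x ^ m := by
    refine Finset.sum_bij (fun (j : ℕ) _ => (j : ZMod p)) ?_ ?_ ?_ ?_
    · intro j _; exact Finset.mem_univ _
    · intro j hj j' hj' h
      rw [Finset.mem_range] at hj hj'
      have := congrArg ZMod.val h
      rwa [ZMod.val_cast_of_lt hj, ZMod.val_cast_of_lt hj'] at this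
    · intro x _
      exact ⟨x.val, Finset.mem_range.2 (ZMod.val_lt x), ZMod.natCast_rightInverse x⟩
    · intro j _; rfl
  rw [h1]
  have h0 : ∑ x : ZMod p, x ^ m = ∑ x ∈ Finset.univ \ {(0 : ZMod p)}, x ^ m := by
    rw [Finset.sum_eq_sum_sdiff_singleton_add (Finset.mem_univ (0 : ZMod p)) (fun x => x ^ m)]
    rw [zero_pow (by omega : m ≠ 0), add_zero]
  rw [h0]
  symm
  refine Finset.sum_bij (fun (u : (ZMod p)ˣ) _ => (u : ZMod p)) ?_ ?_ ?_ ?_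
  · intro u _
    simp [Units.ne_zero u]
  · intro u _ v _ h
    exact Units.ext h
  · intro x hx
    rw [Finset.mem_sdiff, Finset.mem_singleton] at hx
    have hxu : IsUnit x := isUnit_iff_ne_zero.2 hx.2
    exact ⟨hxu.unit, Finset.mem_univ _, hxu.unit_spec⟩
  · intro u _
    rfl

lemma vscU_mod_p {p : ℕ} (hp : p.Prime) {m : ℕ} (hm : 1 ≤ m) :
    ((vscU m (p - 1) : ℤ) : ZMod p) = if (p - 1) ∣ m then -1 else 0 := by
  haveI : Fact p.Prime := ⟨hp⟩
  have hrange : (p - 1) + 1 = p := by have := hp.one_le; omega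
  have h1 : ((vscU m (p - 1) : ℤ) : ZMod p)
      = ∑ j ∈ range p, (-1 : ZMod p) ^ j * (((p-1).choose j : ℕ) : ZMod p) * (j : ZMod p) ^ m := by
    have hr2 : range p = range ((p - 1) + 1) := by rw [hrange]
    rw [vscU, hr2]
    push_cast
    rfl
  rw [h1]
  have h2 : ∀ j ∈ range p, (-1 : ZMod p) ^ j * (((p-1).choose j : ℕ) : ZMod p) * (j : ZMod p) ^ m
      = (j : ZMod p) ^ m := by
    intro j hj
    rw [Finset.mem_range] at hj
    rw [vsc_choose_mod hp j (by omega)]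
    have : (-1 : ZMod p) ^ j * (-1 : ZMod p) ^ j = 1 := by
      rw [← mul_pow]; norm_num
    rw [show (-1 : ZMod p) ^ j * (-1 : ZMod p) ^ j * (j : ZMod p) ^ m
        = ((-1 : ZMod p) ^ j * (-1 : ZMod p) ^ j) * (j : ZMod p) ^ m from by ring, this, one_mul]
  rw [Finset.sum_congr rfl h2]
  exact vsc_sum_range_pow hp hm

lemma vsc_prime_dvd {p : ℕ} (hp : p.Prime) {m : ℕ} (hm : 1 ≤ m) :
    (p : ℤ) ∣ vscU m (p - 1) + (if (p - 1) ∣ m then 1 else 0) := by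
  rw [← ZMod.intCast_zmod_eq_zero_iff_dvd]
  push_cast
  rw [vscU_mod_p hp hm]
  split_ifs <;> simp

lemma vsc_four_dvd {m : ℕ} (hm : 2 ≤ m) (he : Even m) : (4 : ℤ) ∣ vscU m 3 := by
  have h3 : vscU m 3 = -3 + 3 * 2 ^ m - 3 ^ m := by
    rw [vscU]
    rw [Finset.sum_range_succ, Finset.sum_range_succ, Finset.sum_range_succ, Finset.sum_range_succ]
    norm_num
    rw [zero_pow (by omega : m ≠ 0)]
    ring
  suffices hz : ((vscU m 3 : ℤ) : ZMod 4) = 0 by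
    have := (ZMod.intCast_zmod_eq_zero_iff_dvd _ 4).mp hz
    exact_mod_cast this
  rw [h3]
  push_cast
  obtain ⟨u, hu⟩ := he
  obtain ⟨t, rfl⟩ : ∃ t, m = 2 * t := ⟨u, by omega⟩
  have h2 : (2 : ZMod 4) ^ (2 * t) = 0 := by
    obtain ⟨s, rfl⟩ : ∃ s, t = s + 1 := ⟨t - 1, by omega⟩
    rw [show 2 * (s + 1) = 2 + 2 * s from by ring, pow_add]
    have : (2 : ZMod 4) ^ 2 = 0 := by decide
    rw [this, zero_mul]
  have h3' : (3 : ZMod 4) ^ (2 * t) = 1 := by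
    rw [pow_mul]
    have : (3 : ZMod 4) ^ 2 = 1 := by decide
    rw [this, one_pow]
  rw [h2, h3']
  decide

lemma vsc_term_dvd {m k : ℕ} (hm : 2 ≤ m) (he : Even m) (hk : k ≤ m) :
    ((k : ℤ) + 1) ∣ vscU m k + (if (k + 1).Prime ∧ k ∣ m then 1 else 0) := by
  by_cases hkp : (k + 1).Prime
  · have h := vsc_prime_dvd hkp (by omega : 1 ≤ m)
    rw [show (k + 1) - 1 = k from by omega] at h
    have hif : (if (k + 1).Prime ∧ k ∣ m then (1:ℤ) else 0) = (if k ∣ m then 1 else 0) := by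
      simp [hkp]
    rw [hif]
    exact_mod_cast h
  · rw [if_neg (by tauto)]
    rcases eq_or_ne k 0 with rfl | hk0
    · simp
    rcases eq_or_ne k 3 with rfl | hk3
    · simpa using vsc_four_dvd hm he
    · have hq : (k + 1) ∣ k.factorial := by
        have := vsc_comp_dvd_fact (q := k + 1) (by omega) hkp (by omega)
        simpa using this
      have : ((k + 1 : ℕ) : ℤ) ∣ vscU m k :=
        dvd_trans (by exact_mod_cast hq) (factorial_dvd_vscU m k)
      rw [add_zero]
      exact_mod_cast this

/-- von Staudt–Clausen: for every positive integer `n`, the rational number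
`B_{2n} + ∑_{p prime, p-1 ∣ 2n} 1/p` is an integer. -/
theorem von_staudt_clausen (n : ℕ) (hn : 0 < n) :
    ∃ z : ℤ,
      bernoulli (2 * n) +
        ∑ p ∈ (Finset.range (2 * n + 2)).filter (fun p => p.Prime ∧ (p - 1) ∣ 2 * n),
          (1 : ℚ) / p = z := by
  classical
  set m := 2 * n with hm
  have hm2 : 2 ≤ m := by omega
  have he : Even m := ⟨n, by omega⟩
  -- step 1: rewrite the prime sum
  have hprime_sum :
      ∑ p ∈ (Finset.range (m + 2)).filter (fun p => p.Prime ∧ (p - 1) ∣ m), (1 : ℚ) / p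
        = ∑ k ∈ range (m + 1), (if (k + 1).Prime ∧ k ∣ m then (1 : ℚ) / (k + 1) else 0) := by
    rw [← Finset.sum_filter]
    refine Finset.sum_nbij' (fun p => p - 1) (fun k => k + 1) ?_ ?_ ?_ ?_ ?_
    · intro p hp
      rw [Finset.mem_filter, Finset.mem_range] at hp
      obtain ⟨_, hpp, hpd⟩ := hp
      rw [Finset.mem_filter, Finset.mem_range]
      have h2 : 2 ≤ p := hpp.two_le
      refine ⟨?_, ?_, hpd⟩
      · have : p - 1 ≤ m := Nat.le_of_dvd (by omega) hpd
        omega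
      · rw [show p - 1 + 1 = p from by omega]; exact hpp
    · intro k hk
      rw [Finset.mem_filter, Finset.mem_range] at hk
      obtain ⟨hkr, hkp, hkd⟩ := hk
      rw [Finset.mem_filter, Finset.mem_range]
      exact ⟨by omega, hkp, by simpa using hkd⟩
    · intro p hp
      rw [Finset.mem_filter] at hp
      have := hp.2.1.two_le
      omega
    · intro k _
      omega
    · intro p hp
      rw [Finset.mem_filter] at hp
      have h2 : 2 ≤ p := hp.2.1.two_le
      have : ((p - 1 : ℕ) : ℚ) + 1 = (p : ℚ) := by
        have : ((p - 1 : ℕ) : ℚ) = (p : ℚ) - 1 := by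
          push_cast [Nat.cast_sub (by omega : 1 ≤ p)]; ring
        rw [this]; ring
      rw [this]
  rw [show 2 * n + 2 = m + 2 from by omega, bernoulli_eq_vscB, hprime_sum, vscB]
  rw [← Finset.sum_add_distrib]
  -- step 2: each term is an integer
  have hterm : ∀ k ∈ range (m + 1),
      ((vscU m k : ℚ) / (k + 1) + (if (k + 1).Prime ∧ k ∣ m then (1 : ℚ) / (k + 1) else 0))
        ∈ (Int.castRingHom ℚ).range := by
    intro k hk
    rw [Finset.mem_range] at hk
    obtain ⟨c, hc⟩ := vsc_term_dvd hm2 he (by omega : k ≤ m)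
    refine ⟨c, ?_⟩
    have hk1 : ((k : ℚ) + 1) ≠ 0 := by positivity
    have hcast : (vscU m k : ℚ) + (if (k + 1).Prime ∧ k ∣ m then (1 : ℚ) else 0)
        = ((k : ℚ) + 1) * (c : ℚ) := by
      have := congrArg (fun z : ℤ => (z : ℚ)) hc
      push_cast at this
      split_ifs at this ⊢ <;> push_cast at this ⊢ <;> linarith [this]
    have hifdiv : (if (k + 1).Prime ∧ k ∣ m then (1 : ℚ) / (k + 1) else 0)
        = (if (k + 1).Prime ∧ k ∣ m then (1 : ℚ) else 0) / ((k : ℚ) + 1) := by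
      split_ifs <;> simp
    rw [hifdiv]
    rw [← add_div]
    rw [hcast]
    field_simp
    rfl
  have hsum := Subring.sum_mem (Int.castRingHom ℚ).range hterm
  obtain ⟨z, hz⟩ := hsum
  exact ⟨z, by rw [← hz]; rfl⟩
end

section
/- (Kummer's congruence) Let $p$ be an odd prime and $m, n$ positive even integers with $m \equiv n \pmod{p-1}$ and $p-1 \nmid m$. Then $(1-p^{m-1})\frac{B_m}{m} \equiv (1-p^{n-1})\frac{B_n}{n} \pmod{p}$, as elements of $\mathbb{Z}_{(p)}$. -/
open Finset
set_option linter.unusedSectionVars false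

lemma faulhaber' (m N : ℕ) :
    (N:ℚ) * bernoulli m = (∑ k ∈ range N, (k:ℚ)^m)
      - ∑ i ∈ range m, (m.choose i : ℚ) * bernoulli i * ((N:ℚ))^(m+1-i) / ((m+1-i : ℕ):ℚ) := by
  have h := sum_range_pow N m
  rw [Finset.sum_range_succ] at h
  have hlast : bernoulli m * ((m + 1).choose m : ℚ) * (N:ℚ) ^ (m + 1 - m) / (m+1)
      = (N:ℚ) * bernoulli m := by
    rw [Nat.choose_succ_self_right]
    have : m + 1 - m = 1 := by omega
    rw [this]
    have h1 : ((m:ℚ)+1) ≠ 0 := by positivity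
    field_simp
    push_cast; ring
  have hterm : ∀ i ∈ range m, bernoulli i * ((m + 1).choose i : ℚ) * (N:ℚ) ^ (m + 1 - i) / (m+1)
      = (m.choose i : ℚ) * bernoulli i * ((N:ℚ))^(m+1-i) / ((m+1-i : ℕ):ℚ) := by
    intro i hi
    rw [Finset.mem_range] at hi
    have key : (m.choose i : ℚ) * (m + 1) = ((m + 1).choose i : ℚ) * ((m+1-i : ℕ):ℚ) := by
      exact_mod_cast congrArg (Nat.cast : ℕ → ℚ) (Nat.choose_mul_succ_eq m i)
    have h1 : ((m:ℚ)+1) ≠ 0 := by positivity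
    have h2 : ((m+1-i : ℕ):ℚ) ≠ 0 := by
      have : 0 < m + 1 - i := by omega
      positivity
    field_simp
    linear_combination (-(bernoulli i * (N:ℚ)^(m+1-i))) * key
  rw [Finset.sum_congr rfl hterm] at h
  push_cast at h ⊢
  rw [hlast] at h
  linarith [h]


section
variable {p : ℕ} [hp : Fact p.Prime]

lemma pq1 : (1:ℚ) < p := by exact_mod_cast hp.out.one_lt
lemma pq0 : (0:ℚ) < p := lt_trans one_pos pq1

lemma norm_le_mul {a b : ℚ} {x y : ℚ} (ha : padicNorm p a ≤ x) (hb : padicNorm p b ≤ y) :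
    padicNorm p (a*b) ≤ x*y := by
  rw [padicNorm.mul]
  exact mul_le_mul ha hb (padicNorm.nonneg b) (le_trans (padicNorm.nonneg a) ha)

lemma norm_zpow_le {e f : ℤ} (h : e ≤ f) : (p:ℚ)^e ≤ (p:ℚ)^f :=
  (zpow_le_zpow_iff_right₀ pq1).mpr h

lemma pnorm_pow (x : ℚ) (j : ℕ) : padicNorm p (x^j) = (padicNorm p x)^j := by
  induction j with
  | zero => simp [padicNorm.one]
  | succ t ih => rw [pow_succ, padicNorm.mul, ih, pow_succ]

lemma norm_p_pow (j : ℕ) : padicNorm p ((p:ℚ)^j) = (p:ℚ)^(-(j:ℤ)) := by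
  rw [pnorm_pow, padicNorm.padicNorm_p hp.out.one_lt, inv_pow, ← zpow_natCast, ← zpow_neg]

lemma val_le_sub_two (hp3 : 3 ≤ p) {k : ℕ} (hk : 2 ≤ k) :
    (padicValNat p k : ℤ) ≤ (k:ℤ) - 2 := by
  set v := padicValNat p k with hv
  rcases Nat.eq_zero_or_pos v with h | h
  · rw [h]; omega
  · have h3 : ∀ w : ℕ, 1 ≤ w → w + 2 ≤ 3^w := by
      intro w hw
      induction w with
      | zero => omega
      | succ t ih =>
        rcases Nat.eq_zero_or_pos t with ht | ht
        · subst ht; norm_num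
        · have h1 := ih ht
          have h2 : 1 ≤ 3^t := Nat.one_le_two_pow.trans (Nat.pow_le_pow_left (by norm_num) t)
          have : 3^(t+1) = 3^t + 3^t + 3^t := by ring
          omega
    have hd : p ^ v ∣ k := pow_padicValNat_dvd
    have hle : p ^ v ≤ k := Nat.le_of_dvd (by omega) hd
    have h3v : 3 ^ v ≤ p ^ v := Nat.pow_le_pow_left hp3 v
    have := h3 v h
    push_cast
    omega

lemma norm_nat_inv_le (hp3 : 3 ≤ p) {k : ℕ} (hk : 2 ≤ k) :
    padicNorm p ((k:ℚ))⁻¹ ≤ (p:ℚ)^((k:ℤ) - 2) := by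
  have hk0 : (k:ℚ) ≠ 0 := by positivity
  have h1 : padicNorm p ((k:ℚ)) = (p:ℚ)^(-(padicValNat p k : ℤ)) := by
    rw [padicNorm.eq_zpow_of_nonzero hk0, padicValRat.of_nat]
  have h2 : padicNorm p ((k:ℚ))⁻¹ = (p:ℚ)^((padicValNat p k : ℤ)) := by
    rw [← one_div, padicNorm.div, padicNorm.one, h1, one_div, ← zpow_neg, neg_neg]
  rw [h2]
  exact norm_zpow_le (val_le_sub_two hp3 hk)

lemma term_bound (hp3 : 3 ≤ p) (c : ℕ) (b : ℚ) (hb : padicNorm p b ≤ p) (j K : ℕ) (hj : 2 ≤ j) :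
    padicNorm p ((c:ℚ) * b * ((p:ℚ)^K)^j / (j:ℚ)) ≤ (p:ℚ)^((j:ℤ) - 1 - K*j) := by
  rw [div_eq_mul_inv]
  have h1 : padicNorm p ((c:ℚ)) ≤ 1 := padicNorm.of_nat c
  have h2 : padicNorm p (((p:ℚ)^K)^j) = (p:ℚ)^(-((K*j:ℕ):ℤ)) := by
    rw [← pow_mul, norm_p_pow]
  have h3 : padicNorm p ((j:ℚ))⁻¹ ≤ (p:ℚ)^((j:ℤ)-2) := norm_nat_inv_le hp3 hj
  have := norm_le_mul (norm_le_mul (norm_le_mul h1 hb) (le_of_eq h2)) h3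
  refine le_trans this (le_of_eq ?_)
  have hpne : (p:ℚ) ≠ 0 := ne_of_gt pq0
  calc 1*(p:ℚ)*(p:ℚ)^(-((K*j:ℕ):ℤ))*(p:ℚ)^((j:ℤ)-2)
      = (p:ℚ)^(1:ℤ)*(p:ℚ)^(-((K*j:ℕ):ℤ))*(p:ℚ)^((j:ℤ)-2) := by rw [zpow_one, one_mul]
    _ = (p:ℚ)^((1:ℤ) + -((K*j:ℕ):ℤ) + ((j:ℤ)-2)) := by rw [zpow_add₀ hpne, zpow_add₀ hpne]
    _ = (p:ℚ)^((j:ℤ) - 1 - K*j) := by congr 1; push_cast; ring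

lemma bern_claus (hp3 : 3 ≤ p) : ∀ m : ℕ, padicNorm p (bernoulli m) ≤ p := by
  intro m
  induction m using Nat.strong_induction_on with
  | _ m IH =>
    have key := faulhaber' m p
    have hS : padicNorm p (∑ k ∈ range p, (k:ℚ)^m) ≤ 1 := by
      apply padicNorm.sum_le' ?_ zero_le_one
      intro k _
      rw [pnorm_pow]
      exact pow_le_one₀ (padicNorm.nonneg _) (padicNorm.of_nat k)
    have hT : padicNorm p (∑ i ∈ range m,
        (m.choose i : ℚ) * bernoulli i * ((p:ℚ))^(m+1-i) / ((m+1-i : ℕ):ℚ)) ≤ 1 := by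
      apply padicNorm.sum_le' ?_ zero_le_one
      intro i hi
      rw [Finset.mem_range] at hi
      have hj : 2 ≤ m + 1 - i := by omega
      have hb := term_bound (p := p) hp3 (m.choose i) (bernoulli i) (IH i hi) (m+1-i) 1 hj
      rw [pow_one] at hb
      refine le_trans hb ?_
      have h0 : ((m+1-i:ℕ):ℤ) - 1 - (1:ℕ)*((m+1-i:ℕ):ℤ) ≤ 0 := by push_cast; omega
      calc (p:ℚ)^(((m+1-i:ℕ):ℤ)-1-(1:ℕ)*((m+1-i:ℕ):ℤ)) ≤ (p:ℚ)^(0:ℤ) := norm_zpow_le h0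
        _ = 1 := zpow_zero _
    have hfull : padicNorm p ((p:ℚ) * bernoulli m) ≤ 1 := by
      rw [key, sub_eq_add_neg]
      refine le_trans padicNorm.nonarchimedean (max_le hS ?_)
      rwa [padicNorm.neg]
    rw [padicNorm.mul, padicNorm.padicNorm_p hp.out.one_lt] at hfull
    have hp0 : (0:ℚ) < (p:ℚ)⁻¹ := by positivity
    calc padicNorm p (bernoulli m) = (p:ℚ) * ((p:ℚ)⁻¹ * padicNorm p (bernoulli m)) := by
          field_simp
      _ ≤ (p:ℚ) * 1 := by
          apply mul_le_mul_of_nonneg_left hfull (le_of_lt pq0)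
      _ = p := mul_one _
end

lemma modEq_sum' {α : Type*} (s : Finset α) (f g : α → ℤ) (n : ℤ)
    (h : ∀ i ∈ s, f i ≡ g i [ZMOD n]) : (∑ i ∈ s, f i) ≡ ∑ i ∈ s, g i [ZMOD n] := by
  classical
  induction s using Finset.induction with
  | empty => simp [Int.ModEq.refl]
  | @insert a s' hx ih =>
    rw [Finset.sum_insert hx, Finset.sum_insert hx]
    exact Int.ModEq.add (h a (Finset.mem_insert_self a s'))
      (ih fun i hi => h i (Finset.mem_insert_of_mem hi))

lemma binom_aux (x y : ℤ) : ∀ m : ℕ,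
    (x + y)^(m+1) ≡ x^(m+1) + (m+1) * x^m * y [ZMOD y^2] := by
  intro m
  induction m with
  | zero => ring_nf; exact Int.ModEq.refl _
  | succ t ih =>
    have h3 : (x+y)^(t+1) * (x+y) ≡ (x^(t+1) + (t+1) * x^t * y) * (x+y) [ZMOD y^2] :=
      Int.ModEq.mul_right _ ih
    have h4 : (x^(t+1) + (t+1) * x^t * y) * (x+y)
        = x^(t+2) + (t+2) * x^(t+1) * y + ((t+1) * x^t) * y^2 := by push_cast; ring
    have h5 : x^(t+2) + (t+2) * x^(t+1) * y + ((t+1) * x^t) * y^2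
        ≡ x^(t+2) + (t+2) * x^(t+1) * y [ZMOD y^2] :=
      Int.modEq_iff_dvd.mpr ⟨-((t+1) * x^t), by ring⟩
    calc (x+y)^(t+1+1) = (x+y)^(t+1) * (x+y) := by ring
      _ ≡ (x^(t+1) + (t+1) * x^t * y) * (x+y) [ZMOD y^2] := h3
      _ = x^(t+2) + (t+2) * x^(t+1) * y + ((t+1) * x^t) * y^2 := h4
      _ ≡ x^(t+2) + (t+2) * x^(t+1) * y [ZMOD y^2] := h5
      _ = x^(t+1+1) + (↑(t+1)+1) * x^(t+1) * y := by push_cast; ring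

lemma binom_cong (x y : ℤ) (m : ℕ) (hm : 1 ≤ m) :
    (x + y)^m ≡ x^m + m * x^(m-1) * y [ZMOD y^2] := by
  obtain ⟨t, rfl⟩ : ∃ t, m = t + 1 := ⟨m - 1, by omega⟩
  simpa using binom_aux x y t

lemma perm_sum {M : Type*} [AddCommMonoid M] (N a b : ℕ) (hN : 0 < N)
    (hab : a * b ≡ 1 [MOD N]) (f : ℕ → M) :
    ∑ j ∈ range N, f (j * a % N) = ∑ j ∈ range N, f j := by
  have key : ∀ (u v j : ℕ), u * v ≡ 1 [MOD N] → j < N → j * u % N * v % N = j := by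
    intro u v j huv hj
    have h1 : j * u % N * v ≡ j * u * v [MOD N] := Nat.ModEq.mul_right v (Nat.mod_modEq _ N)
    have h2 : j * u * v ≡ j * 1 [MOD N] := by
      rw [mul_assoc]; exact Nat.ModEq.mul_left j huv
    have h3 : j * u % N * v ≡ j [MOD N] := by simpa using h1.trans h2
    calc j * u % N * v % N = j % N := h3
      _ = j := Nat.mod_eq_of_lt hj
  apply Finset.sum_nbij' (i := fun j => j * a % N) (j := fun j => j * b % N)
  · intro x hx; exact Finset.mem_range.mpr (Nat.mod_lt _ hN)
  · intro x hx; exact Finset.mem_range.mpr (Nat.mod_lt _ hN)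
  · intro x hx; exact key a b x hab (Finset.mem_range.mp hx)
  · intro x hx; exact key b a x (by rwa [mul_comm] at hab) (Finset.mem_range.mp hx)
  · intro x hx; rfl

lemma voronoi (N a b m : ℕ) (hN : 0 < N) (hm : 1 ≤ m) (hab : a * b ≡ 1 [MOD N]) :
    ((a:ℤ)^m - 1) * (∑ j ∈ range N, (j:ℤ)^m) ≡
      (m:ℤ) * (a:ℤ)^(m-1) * (N:ℤ) *
        (∑ j ∈ range N, (j:ℤ)^(m-1) * ((j * a / N : ℕ) : ℤ)) [ZMOD (N:ℤ)^2] := by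
  have main : ∀ j : ℕ, ((j:ℤ) * a)^m ≡
      ((j * a % N : ℕ) : ℤ)^m + (m:ℤ) * ((j:ℤ)*a)^(m-1) * ((N:ℤ) * ((j * a / N : ℕ):ℤ))
      [ZMOD (N:ℤ)^2] := by
    intro j
    have hsplit : (j:ℤ) * a = ((j*a%N : ℕ):ℤ) + (N:ℤ)*((j*a/N : ℕ):ℤ) := by
      have h : ((N*(j*a/N) + j*a%N : ℕ) : ℤ) = ((j*a : ℕ):ℤ) := by rw [Nat.div_add_mod]
      rw [Nat.cast_add, Nat.cast_mul, Nat.cast_mul] at h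
      linarith [h]
    set r : ℤ := ((j * a % N : ℕ) : ℤ)
    set q : ℤ := ((j * a / N : ℕ) : ℤ)
    have h1 : (r + (N:ℤ)*q)^m ≡ r^m + (m:ℤ) * r^(m-1) * ((N:ℤ)*q) [ZMOD ((N:ℤ)*q)^2] :=
      binom_cong r ((N:ℤ)*q) m hm
    have h2 : (r + (N:ℤ)*q)^m ≡ r^m + (m:ℤ) * r^(m-1) * ((N:ℤ)*q) [ZMOD (N:ℤ)^2] :=
      h1.of_dvd ⟨q^2, by ring⟩
    have h3 : r ≡ (j:ℤ)*a [ZMOD (N:ℤ)] := by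
      rw [hsplit]; exact (Int.modEq_iff_dvd.mpr ⟨q, by ring⟩)
    have h4 : (m:ℤ) * r^(m-1) * ((N:ℤ)*q) ≡ (m:ℤ) * ((j:ℤ)*a)^(m-1) * ((N:ℤ)*q)
        [ZMOD (N:ℤ)^2] := by
      have h5 : (m:ℤ) * r^(m-1) * q ≡ (m:ℤ) * ((j:ℤ)*a)^(m-1) * q [ZMOD (N:ℤ)] :=
        ((h3.pow (m-1)).mul_left (m:ℤ)).mul_right q
      calc (m:ℤ) * r^(m-1) * ((N:ℤ)*q) = (N:ℤ) * ((m:ℤ) * r^(m-1) * q) := by ring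
        _ ≡ (N:ℤ) * ((m:ℤ) * ((j:ℤ)*a)^(m-1) * q) [ZMOD (N:ℤ)^2] := by
            have h6 := h5.mul_left' (c := (N:ℤ))
            exact h6.of_dvd ⟨1, by ring⟩
        _ = (m:ℤ) * ((j:ℤ)*a)^(m-1) * ((N:ℤ)*q) := by ring
    rw [← hsplit] at h2
    exact h2.trans ((Int.ModEq.refl _).add h4)
  have hsum := modEq_sum' (range N) _ _ _ (fun j _ => main j)
  have e1 : ∑ j ∈ range N, ((j:ℤ) * a)^m = (a:ℤ)^m * ∑ j ∈ range N, (j:ℤ)^m := by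
    rw [Finset.mul_sum]; apply Finset.sum_congr rfl; intro j _; ring
  have e2 : ∑ j ∈ range N, (((j * a % N : ℕ) : ℤ)^m + (m:ℤ) * ((j:ℤ)*a)^(m-1) *
        ((N:ℤ) * ((j * a / N : ℕ):ℤ)))
      = (∑ j ∈ range N, (j:ℤ)^m) + (m:ℤ) * (a:ℤ)^(m-1) * (N:ℤ) *
        (∑ j ∈ range N, (j:ℤ)^(m-1) * ((j * a / N : ℕ) : ℤ)) := by
    rw [Finset.sum_add_distrib]
    congr 1
    · exact perm_sum N a b hN hab (fun t => ((t:ℕ):ℤ)^m)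
    · rw [Finset.mul_sum]; apply Finset.sum_congr rfl; intro j _
      push_cast; ring
  rw [e1, e2] at hsum
  have := hsum.sub_right (∑ j ∈ range N, (j:ℤ)^m)
  calc ((a:ℤ)^m - 1) * (∑ j ∈ range N, (j:ℤ)^m)
      = (a:ℤ)^m * (∑ j ∈ range N, (j:ℤ)^m) - (∑ j ∈ range N, (j:ℤ)^m) := by ring
    _ ≡ (∑ j ∈ range N, (j:ℤ)^m) + (m:ℤ) * (a:ℤ)^(m-1) * (N:ℤ) *
        (∑ j ∈ range N, (j:ℤ)^(m-1) * ((j * a / N : ℕ) : ℤ)) - (∑ j ∈ range N, (j:ℤ)^m)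
        [ZMOD (N:ℤ)^2] := this
    _ = (m:ℤ) * (a:ℤ)^(m-1) * (N:ℤ) *
        (∑ j ∈ range N, (j:ℤ)^(m-1) * ((j * a / N : ℕ) : ℤ)) := by ring

section
variable {p : ℕ} [hp : Fact p.Prime]

lemma pow_congr_zmod (x : ZMod p) (s t : ℕ) (hs : 1 ≤ s) (ht : 1 ≤ t)
    (h : s ≡ t [MOD p - 1]) : x ^ s = x ^ t := by
  by_cases hx : x = 0
  · subst hx
    rw [zero_pow (by omega), zero_pow (by omega)]
  · obtain ⟨u, rfl⟩ := isUnit_iff_ne_zero.mpr hx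
    have h1 : u ^ (p-1) = 1 := by
      apply Units.ext
      rw [Units.val_pow_eq_pow_val, Units.val_one]
      exact ZMod.pow_card_sub_one_eq_one u.ne_zero
    have h2 : orderOf u ∣ p - 1 := orderOf_dvd_of_pow_eq_one h1
    have h3 : u ^ s = u ^ t := pow_eq_pow_iff_modEq.mpr (h.of_dvd h2)
    rw [← Units.val_pow_eq_pow_val, ← Units.val_pow_eq_pow_val, h3]

lemma exists_good_a (m : ℕ) (hnd : ¬ (p - 1) ∣ m) :
    ∃ a : ℕ, ¬ p ∣ a ∧ ((a : ZMod p))^m ≠ 1 := by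
  haveI : NeZero p := ⟨hp.out.ne_zero⟩
  obtain ⟨g, hg⟩ := IsCyclic.exists_generator (α := (ZMod p)ˣ)
  have horder : orderOf g = p - 1 := by
    rw [orderOf_eq_card_of_forall_mem_zpowers hg, Nat.card_eq_fintype_card, ZMod.card_units p]
  refine ⟨((g : ZMod p)).val, ?_, ?_⟩
  · intro hdvd
    have h0 : (((g : ZMod p).val : ℕ) : ZMod p) = 0 :=
      (ZMod.natCast_eq_zero_iff _ p).mpr hdvd
    rw [ZMod.natCast_val, ZMod.cast_id] at h0
    exact (g.ne_zero) h0
  · intro hone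
    rw [ZMod.natCast_val, ZMod.cast_id] at hone
    have hu : g ^ m = 1 := by
      ext
      push_cast
      exact hone
    exact hnd (horder ▸ orderOf_dvd_of_pow_eq_one hu)

lemma exists_inverse (a K : ℕ) (ha : ¬ p ∣ a) : ∃ b : ℕ, a * b ≡ 1 [MOD p^K] := by
  have hcop : Nat.Coprime a (p^K) :=
    Nat.Coprime.pow_right K ((Nat.Prime.coprime_iff_not_dvd hp.out).mpr ha).symm
  haveI : NeZero (p^K) := ⟨pow_ne_zero K hp.out.ne_zero⟩
  refine ⟨((a : ZMod (p^K))⁻¹).val, ?_⟩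
  have h1 : (a : ZMod (p^K)) * (a : ZMod (p^K))⁻¹ = 1 := ZMod.coe_mul_inv_eq_one a hcop
  have h2 : ((a * ((a : ZMod (p^K))⁻¹).val : ℕ) : ZMod (p^K)) = ((1 : ℕ) : ZMod (p^K)) := by
    push_cast
    rw [ZMod.natCast_val, ZMod.cast_id]
    rw [h1]
  exact (ZMod.natCast_eq_natCast_iff _ _ _).mp h2

lemma sums_congr (a K m n : ℕ) (hm : 2 ≤ m) (hn : 2 ≤ n)
    (hcong : m ≡ n [MOD p - 1]) :
    (p:ℤ) ∣ ((a:ℤ)^(m-1) * (∑ j ∈ range (p^K), (j:ℤ)^(m-1) * ((j * a / (p^K) : ℕ) : ℤ))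
           - (a:ℤ)^(n-1) * (∑ j ∈ range (p^K), (j:ℤ)^(n-1) * ((j * a / (p^K) : ℕ) : ℤ))) := by
  have hcong' : m - 1 ≡ n - 1 [MOD p - 1] := by
    apply Nat.ModEq.add_right_cancel' 1
    rw [Nat.sub_add_cancel (by omega), Nat.sub_add_cancel (by omega)]
    exact hcong
  have hterm : ∀ j : ℕ, ((a:ℤ)*j)^(m-1) ≡ ((a:ℤ)*j)^(n-1) [ZMOD (p:ℤ)] := by
    intro j
    have key : ((a:ZMod p) * (j : ZMod p))^(m-1) = ((a:ZMod p) * (j : ZMod p))^(n-1) :=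
      pow_congr_zmod _ _ _ (by omega) (by omega) hcong'
    have : ((((a:ℤ)*j)^(m-1) : ℤ) : ZMod p) = ((((a:ℤ)*j)^(n-1) : ℤ) : ZMod p) := by
      push_cast
      exact_mod_cast key
    exact (ZMod.intCast_eq_intCast_iff _ _ _).mp this
  have hsum : (∑ j ∈ range (p^K), (a:ℤ)^(m-1) * ((j:ℤ)^(m-1) * ((j * a / (p^K) : ℕ) : ℤ)))
      ≡ (∑ j ∈ range (p^K), (a:ℤ)^(n-1) * ((j:ℤ)^(n-1) * ((j * a / (p^K) : ℕ) : ℤ)))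
      [ZMOD (p:ℤ)] := by
    refine modEq_sum' _ _ _ _ (fun j _ => ?_)
    have h := (hterm j).mul_right ((j * a / (p^K) : ℕ) : ℤ)
    rw [mul_pow, mul_pow] at h
    rw [← mul_assoc, ← mul_assoc]
    exact h
  rw [Finset.mul_sum, Finset.mul_sum]
  exact Int.ModEq.dvd hsum.symm

end

section
variable {p : ℕ} [hp : Fact p.Prime]

lemma norm_max {a b : ℚ} {x : ℚ} (ha : padicNorm p a ≤ x) (hb : padicNorm p b ≤ x) :
    padicNorm p (a+b) ≤ x :=
  le_trans padicNorm.nonarchimedean (max_le ha hb)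

lemma norm_max_sub {a b : ℚ} {x : ℚ} (ha : padicNorm p a ≤ x) (hb : padicNorm p b ≤ x) :
    padicNorm p (a-b) ≤ x := by
  rw [sub_eq_add_neg]; exact norm_max ha (by rwa [padicNorm.neg])

lemma L2 (hp3 : 3 ≤ p) (m K : ℕ) :
    padicNorm p ((((p^K : ℕ)):ℚ) * bernoulli m - ∑ k ∈ range (p^K), (k:ℚ)^m)
      ≤ (p:ℚ)^((m:ℤ) - 2*K) := by
  have key := faulhaber' m (p^K)
  have hdiff : (((p^K : ℕ)):ℚ) * bernoulli m - (∑ k ∈ range (p^K), (k:ℚ)^m)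
      = -(∑ i ∈ range m,
          (m.choose i : ℚ) * bernoulli i * (((p^K:ℕ)):ℚ)^(m+1-i) / ((m+1-i : ℕ):ℚ)) := by
    rw [key]; ring
  rw [hdiff, padicNorm.neg]
  apply padicNorm.sum_le' ?_ (le_of_lt (zpow_pos pq0 _))
  intro i hi
  rw [Finset.mem_range] at hi
  have hj : 2 ≤ m + 1 - i := by omega
  have hcast : (((p^K:ℕ)):ℚ) = (p:ℚ)^K := by push_cast; ring
  rw [hcast]
  have hb := term_bound (p := p) hp3 (m.choose i) (bernoulli i) (bern_claus hp3 i) (m+1-i) K hj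
  refine le_trans hb (norm_zpow_le ?_)
  have h1 : ((m+1-i:ℕ):ℤ) = (m:ℤ)+1-i := by omega
  rw [h1]
  have h2 : (K:ℤ)*2 ≤ (K:ℤ)*((m:ℤ)+1-i) := by
    apply mul_le_mul_of_nonneg_left _ (by positivity)
    omega
  have h3 : (i:ℤ) ≤ (m:ℤ) - 0 := by omega
  nlinarith [h2]

lemma main_m (hp3 : 3 ≤ p) (a b m K : ℕ) (hm2 : 2 ≤ m) (hK : 2*m ≤ K)
    (hab : a * b ≡ 1 [MOD p^K]) :
    padicNorm p (((a:ℚ)^m - 1) * bernoulli m / m - (a:ℚ)^(m-1) *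
      ((∑ j ∈ range (p^K), (j:ℤ)^(m-1) * ((j * a / (p^K) : ℕ) : ℤ) : ℤ) : ℚ)) ≤ (p:ℚ)⁻¹ := by
  set N : ℕ := p^K with hN
  have hN0 : 0 < N := pow_pos hp.out.pos K
  set Sig : ℤ := ∑ j ∈ range N, (j:ℤ)^(m-1) * ((j * a / N : ℕ) : ℤ) with hSig
  -- step 1 : Voronoi congruence, cast to ℚ
  have hvor := voronoi N a b m hN0 (by omega) hab
  have hdvd : ((p:ℤ)^(2*K)) ∣ ((m:ℤ) * (a:ℤ)^(m-1) * (N:ℤ) * Sig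
      - ((a:ℤ)^m - 1) * (∑ j ∈ range N, (j:ℤ)^m)) := by
    have h2 : ((N:ℤ))^2 = (p:ℤ)^(2*K) := by
      rw [hN]; push_cast; ring
    rw [← h2]
    exact hvor.dvd
  have hnorm1 : padicNorm p ((((m:ℤ) * (a:ℤ)^(m-1) * (N:ℤ) * Sig
      - ((a:ℤ)^m - 1) * (∑ j ∈ range N, (j:ℤ)^m) : ℤ)) : ℚ) ≤ (p:ℚ)^(-(2*K : ℕ) : ℤ) := by
    apply padicNorm.dvd_iff_norm_le.mp
    exact_mod_cast hdvd
  -- step 2 : L2 times (a^m - 1)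
  have hL2 := L2 (p := p) hp3 m K
  have hintnorm : padicNorm p ((a:ℚ)^m - 1) ≤ 1 := by
    have : ((a:ℚ)^m - 1) = (((a:ℤ)^m - 1 : ℤ) : ℚ) := by push_cast; ring
    rw [this]
    exact padicNorm.of_int _
  have hnorm2 : padicNorm p (((a:ℚ)^m - 1) * ((((p^K : ℕ)):ℚ) * bernoulli m
      - ∑ k ∈ range (p^K), (k:ℚ)^m)) ≤ 1 * (p:ℚ)^((m:ℤ) - 2*K) :=
    norm_le_mul hintnorm hL2
  rw [one_mul] at hnorm2
  -- step 3 : combine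
  have hcomb : padicNorm p (((a:ℚ)^m - 1) * ((N:ℕ):ℚ) * bernoulli m
      - (m:ℚ) * (a:ℚ)^(m-1) * ((N:ℕ):ℚ) * (Sig : ℚ)) ≤ (p:ℚ)^((m:ℤ) - 2*K) := by
    have heq : ((a:ℚ)^m - 1) * ((N:ℕ):ℚ) * bernoulli m
        - (m:ℚ) * (a:ℚ)^(m-1) * ((N:ℕ):ℚ) * (Sig : ℚ)
        = (((a:ℚ)^m - 1) * ((((p^K : ℕ)):ℚ) * bernoulli m - ∑ k ∈ range (p^K), (k:ℚ)^m))
          + (-((((m:ℤ) * (a:ℤ)^(m-1) * (N:ℤ) * Sig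
              - ((a:ℤ)^m - 1) * (∑ j ∈ range N, (j:ℤ)^m) : ℤ)) : ℚ)) := by
      simp only [hN, hSig]
      push_cast
      ring
    rw [heq]
    apply norm_max hnorm2
    rw [padicNorm.neg]
    refine le_trans hnorm1 (norm_zpow_le ?_)
    push_cast
    omega
  -- step 4 : divide by N * m
  have hm0 : (m:ℚ) ≠ 0 := by positivity
  have hN0' : ((N:ℕ):ℚ) ≠ 0 := by positivity
  have hTeq : ((a:ℚ)^m - 1) * bernoulli m / m - (a:ℚ)^(m-1) * (Sig : ℚ)
      = (((a:ℚ)^m - 1) * ((N:ℕ):ℚ) * bernoulli m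
        - (m:ℚ) * (a:ℚ)^(m-1) * ((N:ℕ):ℚ) * (Sig : ℚ)) * (((N:ℕ):ℚ) * (m:ℚ))⁻¹ := by
    field_simp
  rw [hTeq]
  have hNnorm : padicNorm p (((N:ℕ):ℚ) * (m:ℚ))⁻¹
      = (p:ℚ)^((K : ℤ) + (padicValNat p m : ℤ)) := by
    rw [← one_div, padicNorm.div, padicNorm.one, padicNorm.mul]
    have e1 : padicNorm p ((N:ℕ):ℚ) = (p:ℚ)^(-(K:ℤ)) := by
      have : ((N:ℕ):ℚ) = (p:ℚ)^K := by rw [hN]; push_cast; ring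
      rw [this, norm_p_pow]
    have e2 : padicNorm p ((m:ℚ)) = (p:ℚ)^(-(padicValNat p m : ℤ)) := by
      rw [padicNorm.eq_zpow_of_nonzero hm0, padicValRat.of_nat]
    rw [e1, e2, ← zpow_add₀ (ne_of_gt pq0), one_div, ← zpow_neg]
    congr 1
    ring
  rw [padicNorm.mul, hNnorm]
  have hv : (padicValNat p m : ℤ) ≤ (m:ℤ) - 2 := val_le_sub_two hp3 hm2
  calc padicNorm p (((a:ℚ)^m - 1) * ((N:ℕ):ℚ) * bernoulli m
        - (m:ℚ) * (a:ℚ)^(m-1) * ((N:ℕ):ℚ) * (Sig : ℚ)) * (p:ℚ)^((K : ℤ) + (padicValNat p m : ℤ))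
      ≤ (p:ℚ)^((m:ℤ) - 2*K) * (p:ℚ)^((K : ℤ) + (padicValNat p m : ℤ)) := by
        apply mul_le_mul_of_nonneg_right hcomb (le_of_lt (zpow_pos pq0 _))
    _ = (p:ℚ)^(((m:ℤ) - 2*K) + ((K : ℤ) + (padicValNat p m : ℤ))) := by
        rw [← zpow_add₀ (ne_of_gt pq0)]
    _ ≤ (p:ℚ)^(-1 : ℤ) := by
        apply norm_zpow_le
        omega
    _ = (p:ℚ)⁻¹ := by rw [zpow_neg_one]

end
section
variable {p : ℕ} [hp : Fact p.Prime]

lemma pintegral_of_norm_le_one {q : ℚ} (h : padicNorm p q ≤ 1) : ¬ (p ∣ q.den) := by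
  intro hd
  by_cases hq : q = 0
  · rw [hq] at hd
    simp at hd
    exact hp.out.one_lt.ne' hd
  · have hnum : ¬ (p:ℤ) ∣ q.num := by
      intro hdn
      have h1 : p ∣ q.num.natAbs := by
        have h2 := Int.natAbs_dvd_natAbs.mpr hdn
        simpa using h2
      have h2 : p ∣ Nat.gcd q.num.natAbs q.den := Nat.dvd_gcd h1 hd
      rw [q.reduced] at h2
      have h3 := Nat.le_of_dvd one_pos h2
      have h4 := hp.out.two_le
      omega
    have hvnum : padicValInt p q.num = 0 := padicValInt.eq_zero_of_not_dvd hnum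
    have hvden : 1 ≤ padicValNat p q.den :=
      one_le_padicValNat_of_dvd q.den_ne_zero hd
    have hval : padicValRat p q ≤ -1 := by
      rw [padicValRat_def, hvnum]
      omega
    rw [padicNorm.eq_zpow_of_nonzero hq] at h
    have h2 : (p:ℚ)^(-padicValRat p q) ≤ (p:ℚ)^(0:ℤ) := by rw [zpow_zero]; exact h
    have h3 := (zpow_le_zpow_iff_right₀ pq1).mp h2
    omega

end
/-- `q` is `p`-integral, i.e. lies in the localization `ℤ_(p)`. -/
def PIntegral (p : ℕ) (q : ℚ) : Prop := ¬ (p ∣ q.den)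

/-- Kummer's congruence: for an odd prime `p` and positive even integers `m, n` with
`m ≡ n (mod p-1)` and `p-1 ∤ m`, one has
`(1-p^(m-1)) B_m/m ≡ (1-p^(n-1)) B_n/n (mod p)` in `ℤ_(p)`. -/
theorem kummer_congruence (p : ℕ) (hp : p.Prime) (hodd : Odd p)
    (m n : ℕ) (hm : 0 < m) (hn : 0 < n) (hme : Even m) (hne : Even n)
    (hcong : m ≡ n [MOD p - 1]) (hnd : ¬ (p - 1) ∣ m) :
    PIntegral p
      (((1 - (p : ℚ) ^ (m - 1)) * bernoulli m / m
        - (1 - (p : ℚ) ^ (n - 1)) * bernoulli n / n) / p) := by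
  haveI : Fact p.Prime := ⟨hp⟩
  have hp3 : 3 ≤ p := by
    rcases hodd with ⟨t, ht⟩
    have := hp.two_le
    omega
  have hm2 : 2 ≤ m := by
    rcases hme with ⟨t, ht⟩
    omega
  have hn2 : 2 ≤ n := by
    rcases hne with ⟨t, ht⟩
    omega
  obtain ⟨a, hpa, ham⟩ := exists_good_a m hnd
  set K : ℕ := 2*(m+n)+2 with hK
  obtain ⟨b, hab⟩ := exists_inverse a K hpa
  set Sm : ℤ := ∑ j ∈ Finset.range (p^K), (j:ℤ)^(m-1) * ((j * a / (p^K) : ℕ) : ℤ) with hSm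
  set Sn : ℤ := ∑ j ∈ Finset.range (p^K), (j:ℤ)^(n-1) * ((j * a / (p^K) : ℕ) : ℤ) with hSn
  have h1 := main_m hp3 a b m K hm2 (by omega) hab
  have h2 := main_m hp3 a b n K hn2 (by omega) hab
  rw [← hSm] at h1
  rw [← hSn] at h2
  -- a is nonzero mod p, and a^m = a^n ≠ 1 mod p
  have hpowmn : ((a:ZMod p))^m = ((a:ZMod p))^n :=
    pow_congr_zmod _ _ _ (by omega) (by omega) hcong
  have haunit : ∀ s : ℕ, ((a:ZMod p))^s = ((a:ZMod p))^m → padicNorm p ((a:ℚ)^s - 1) = 1 := by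
    intro s hs
    have hcast : ((a:ℚ)^s - 1) = (((a:ℤ)^s - 1 : ℤ) : ℚ) := by push_cast; ring
    rw [hcast, padicNorm.int_eq_one_iff]
    intro hdvd
    have h0 : (((a:ℤ)^s - 1 : ℤ) : ZMod p) = 0 :=
      (ZMod.intCast_zmod_eq_zero_iff_dvd _ p).mpr hdvd
    push_cast at h0
    rw [sub_eq_zero] at h0
    rw [hs] at h0
    exact ham h0
  have haum : padicNorm p ((a:ℚ)^m - 1) = 1 := haunit m rfl
  have haun : padicNorm p ((a:ℚ)^n - 1) = 1 := haunit n hpowmn.symm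
  have hpinv1 : (p:ℚ)⁻¹ ≤ 1 := by
    rw [inv_le_one_iff₀]
    right
    exact le_of_lt pq1
  -- B_s/s is p-integral
  have hBint : ∀ (s : ℕ) (S : ℤ), 2 ≤ s → padicNorm p ((a:ℚ)^s - 1) = 1 →
      padicNorm p (((a:ℚ)^s - 1) * bernoulli s / s - (a:ℚ)^(s-1) * (S:ℚ)) ≤ (p:ℚ)⁻¹ →
      padicNorm p (bernoulli s / s) ≤ 1 := by
    intro s S hs hunit hmain
    have hint : padicNorm p ((a:ℚ)^(s-1) * (S:ℚ)) ≤ 1 := by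
      have : ((a:ℚ)^(s-1) * (S:ℚ)) = (((a:ℤ)^(s-1) * S : ℤ) : ℚ) := by push_cast; ring
      rw [this]
      exact padicNorm.of_int _
    have hfull : padicNorm p (((a:ℚ)^s - 1) * bernoulli s / s) ≤ 1 := by
      have heq : ((a:ℚ)^s - 1) * bernoulli s / s
          = (((a:ℚ)^s - 1) * bernoulli s / s - (a:ℚ)^(s-1) * (S:ℚ)) + (a:ℚ)^(s-1) * (S:ℚ) := by
        ring
      rw [heq]
      exact norm_max (le_trans hmain hpinv1) hint
    rw [mul_div_assoc, padicNorm.mul, hunit, one_mul] at hfull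
    exact hfull
  have hBm : padicNorm p (bernoulli m / m) ≤ 1 := hBint m Sm hm2 haum h1
  have hBn : padicNorm p (bernoulli n / n) ≤ 1 := hBint n Sn hn2 haun h2
  -- the two integer sums agree mod p
  have h3 : padicNorm p ((a:ℚ)^(m-1) * (Sm:ℚ) - (a:ℚ)^(n-1) * (Sn:ℚ)) ≤ (p:ℚ)⁻¹ := by
    have hdvd := sums_congr (p := p) a K m n hm2 hn2 hcong
    rw [← hSm, ← hSn] at hdvd
    have hcast : ((a:ℚ)^(m-1) * (Sm:ℚ) - (a:ℚ)^(n-1) * (Sn:ℚ))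
        = (((a:ℤ)^(m-1) * Sm - (a:ℤ)^(n-1) * Sn : ℤ) : ℚ) := by push_cast; ring
    rw [hcast]
    have := padicNorm.dvd_iff_norm_le (p := p) (n := 1)
        (z := ((a:ℤ)^(m-1) * Sm - (a:ℤ)^(n-1) * Sn)) |>.mp (by simpa using hdvd)
    simpa using this
  -- main difference
  have h4 : padicNorm p (((a:ℚ)^m - 1) * bernoulli m / m
      - ((a:ℚ)^n - 1) * bernoulli n / n) ≤ (p:ℚ)⁻¹ := by
    have heq : ((a:ℚ)^m - 1) * bernoulli m / m - ((a:ℚ)^n - 1) * bernoulli n / n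
        = (((a:ℚ)^m - 1) * bernoulli m / m - (a:ℚ)^(m-1) * (Sm:ℚ))
          + (((a:ℚ)^(m-1) * (Sm:ℚ) - (a:ℚ)^(n-1) * (Sn:ℚ))
          + (-(((a:ℚ)^n - 1) * bernoulli n / n - (a:ℚ)^(n-1) * (Sn:ℚ)))) := by ring
    rw [heq]
    exact norm_max h1 (norm_max h3 (by rwa [padicNorm.neg]))
  -- a^m - a^n is divisible by p
  have h5 : padicNorm p ((a:ℚ)^m - (a:ℚ)^n) ≤ (p:ℚ)⁻¹ := by
    have hdvd : (p:ℤ) ∣ ((a:ℤ)^m - (a:ℤ)^n) := by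
      rw [← ZMod.intCast_zmod_eq_zero_iff_dvd]
      push_cast
      rw [sub_eq_zero]
      exact_mod_cast hpowmn
    have hcast : ((a:ℚ)^m - (a:ℚ)^n) = (((a:ℤ)^m - (a:ℤ)^n : ℤ) : ℚ) := by push_cast; ring
    rw [hcast]
    have := padicNorm.dvd_iff_norm_le (p := p) (n := 1)
        (z := ((a:ℤ)^m - (a:ℤ)^n)) |>.mp (by simpa using hdvd)
    simpa using this
  -- Kummer for B/s
  have h6 : padicNorm p (bernoulli m / m - bernoulli n / n) ≤ (p:ℚ)⁻¹ := by
    have heq : ((a:ℚ)^m - 1) * (bernoulli m / m - bernoulli n / n)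
        = (((a:ℚ)^m - 1) * bernoulli m / m - ((a:ℚ)^n - 1) * bernoulli n / n)
          - ((a:ℚ)^m - (a:ℚ)^n) * (bernoulli n / n) := by ring
    have hr : padicNorm p (((a:ℚ)^m - 1) * (bernoulli m / m - bernoulli n / n)) ≤ (p:ℚ)⁻¹ := by
      rw [heq]
      apply norm_max_sub h4
      calc padicNorm p (((a:ℚ)^m - (a:ℚ)^n) * (bernoulli n / n)) ≤ (p:ℚ)⁻¹ * 1 :=
            norm_le_mul h5 hBn
        _ = (p:ℚ)⁻¹ := mul_one _
    rwa [padicNorm.mul, haum, one_mul] at hr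
  -- Euler factors
  have h7 : ∀ (s : ℕ), 2 ≤ s → padicNorm p (bernoulli s / s) ≤ 1 →
      padicNorm p ((p:ℚ)^(s-1) * (bernoulli s / s)) ≤ (p:ℚ)⁻¹ := by
    intro s hs hB
    calc padicNorm p ((p:ℚ)^(s-1) * (bernoulli s / s)) ≤ (p:ℚ)^(-((s-1:ℕ):ℤ)) * 1 :=
          norm_le_mul (le_of_eq (norm_p_pow _)) hB
      _ = (p:ℚ)^(-((s-1:ℕ):ℤ)) := mul_one _
      _ ≤ (p:ℚ)^(-1:ℤ) := by
          apply norm_zpow_le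
          omega
      _ = (p:ℚ)⁻¹ := zpow_neg_one _
  -- final
  have hW : padicNorm p ((1 - (p : ℚ) ^ (m - 1)) * bernoulli m / m
      - (1 - (p : ℚ) ^ (n - 1)) * bernoulli n / n) ≤ (p:ℚ)⁻¹ := by
    have heq : (1 - (p : ℚ) ^ (m - 1)) * bernoulli m / m
        - (1 - (p : ℚ) ^ (n - 1)) * bernoulli n / n
        = (bernoulli m / m - bernoulli n / n)
          + (-((p:ℚ)^(m-1) * (bernoulli m / m)) + (p:ℚ)^(n-1) * (bernoulli n / n)) := by
      field_simp
      ring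
    rw [heq]
    refine norm_max h6 (norm_max ?_ (h7 n hn2 hBn))
    rw [padicNorm.neg]
    exact h7 m hm2 hBm
  apply pintegral_of_norm_le_one
  rw [padicNorm.div, padicNorm.padicNorm_p hp.one_lt]
  rw [div_le_one (by positivity)]
  exact hW
end

section
/- Let $x(u)$ be the formal Laurent series solution of $x'(u)^2 = 4x(u)^3 - 4$ of the form $x(u) = u^{-2} + \sum_{k\ge 1} c_k u^{k-2}$ with rational coefficients. Then $c_k = 0$ unless $6 \mid k$, i.e., $x(u) = u^{-2} + \sum_{n\ge 1} a_n u^{6n-2}$ for some rationals $a_n$. -/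
open PowerSeries Finset

lemma antidiag_sum_reduce (n : ℕ) (hn : ¬ (6 ∣ n)) (f g : ℕ → ℚ)
    (hf : ∀ i < n, ¬ (6 ∣ i) → f i = 0) (hg : ∀ i < n, ¬ (6 ∣ i) → g i = 0) :
    ∑ p ∈ antidiagonal n, f p.1 * g p.2 = f n * g 0 + f 0 * g n := by
  have hn0 : n ≠ 0 := by rintro rfl; exact hn (dvd_zero 6)
  have hsub : ({(n, 0), (0, n)} : Finset (ℕ × ℕ)) ⊆ antidiagonal n := by
    intro p hp
    simp only [mem_insert, mem_singleton] at hp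
    rcases hp with rfl | rfl <;> simp
  rw [← Finset.sum_subset hsub]
  · rw [Finset.sum_insert (by simp [Prod.ext_iff, hn0]), Finset.sum_singleton]
  · rintro ⟨a, b⟩ hp hnp
    simp only [mem_insert, mem_singleton, Prod.mk.injEq, not_or] at hnp
    push_neg at hnp
    obtain ⟨h1, h2⟩ := hnp
    have hpn : a + b = n := Finset.HasAntidiagonal.mem_antidiagonal.mp hp
    have ha0 : a ≠ 0 := by rintro rfl; exact h2 rfl (by omega)
    have han : a ≠ n := by rintro rfl; exact h1 rfl (by omega)
    by_cases h6 : 6 ∣ a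
    · have hb6 : ¬ 6 ∣ b := fun hb => hn (hpn ▸ Nat.dvd_add h6 hb)
      rw [hg b (by omega) hb6, mul_zero]
    · rw [hf a (by omega) h6, zero_mul]

/-- Writing `x(u) = u⁻² + ∑_{k≥1} c_k u^(k-2)` as `x(u) = P(u)/u²` with
`P ∈ ℚ⟦u⟧`, `P(0) = 1`, the equation `x'² = 4x³ - 4` becomes
`(u P' - 2P)² = 4P³ - 4u⁶`.  Then `c_k` (= coefficient of `u^k` in `P`)
vanishes unless `6 ∣ k`. -/
theorem coeff_vanish_unless_six_dvd (P : ℚ⟦X⟧)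
    (h0 : constantCoeff P = 1)
    (hode : (X * d⁄dX ℚ P - 2 * P) ^ 2 = 4 * P ^ 3 - 4 * X ^ 6) :
    ∀ k : ℕ, ¬ (6 ∣ k) → coeff k P = 0 := by
  have hc0 : coeff 0 P = 1 := by rwa [coeff_zero_eq_constantCoeff]
  -- coefficient of Q = X P' - 2P
  have hQ : ∀ i : ℕ, coeff i (X * d⁄dX ℚ P - 2 * P)
      = ((i : ℚ) - 2) * coeff i P := by
    intro i
    rw [map_sub]
    cases i with
    | zero => simp [coeff_zero_eq_constantCoeff, map_ofNat]
    | succ m =>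
      rw [coeff_succ_X_mul, coeff_derivative]
      have : coeff (m + 1) (2 * P) = 2 * coeff (m + 1) P := by
        simp [two_mul, map_add]
      rw [this]
      push_cast
      ring
  intro k
  induction k using Nat.strong_induction_on with
  | _ n IH =>
    intro h6
    have hn0 : n ≠ 0 := by rintro rfl; exact h6 (dvd_zero 6)
    -- vanishing hypotheses below n
    have hcc : ∀ i < n, ¬ (6 ∣ i) → coeff i P = 0 := fun i hi h => IH i hi h
    have hQQ : ∀ i < n, ¬ (6 ∣ i) → ((i : ℚ) - 2) * coeff i P = 0 := by
      intro i hi h; rw [hcc i hi h, mul_zero]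
    -- coeff n of P²
    have hP2 : coeff n (P * P) = 2 * coeff n P := by
      rw [coeff_mul, antidiag_sum_reduce n h6 _ _ hcc hcc, hc0]; ring
    -- coeff j of P² for j < n, ¬6∣j
    have hP2low : ∀ j < n, ¬ (6 ∣ j) → coeff j (P * P) = 0 := by
      intro j hj hj6
      rw [coeff_mul]
      refine Finset.sum_eq_zero ?_
      rintro ⟨a, b⟩ hp
      have hab : a + b = j := Finset.HasAntidiagonal.mem_antidiagonal.mp hp
      by_cases h6a : 6 ∣ a
      · have : ¬ 6 ∣ b := fun hb => hj6 (hab ▸ Nat.dvd_add h6a hb)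
        rw [hcc b (by omega) this, mul_zero]
      · rw [hcc a (by omega) h6a, zero_mul]
    have hP20 : coeff 0 (P * P) = 1 := by
      rw [coeff_zero_eq_constantCoeff, map_mul, h0, one_mul]
    -- coeff n of P³
    have hP3 : coeff n (P ^ 3) = 3 * coeff n P := by
      have : P ^ 3 = (P * P) * P := by ring
      rw [this, coeff_mul,
        antidiag_sum_reduce n h6 (fun i => coeff i (P * P)) (fun i => coeff i P)
          hP2low hcc, hP2, hP20, hc0]
      ring
    -- coeff n of LHS
    have hL : coeff n ((X * d⁄dX ℚ P - 2 * P) ^ 2)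
        = (-4 * (n : ℚ) + 8) * coeff n P := by
      have : (X * d⁄dX ℚ P - 2 * P) ^ 2
          = (X * d⁄dX ℚ P - 2 * P) * (X * d⁄dX ℚ P - 2 * P) := sq _
      rw [this, coeff_mul]
      have := antidiag_sum_reduce n h6
        (fun i => coeff i (X * d⁄dX ℚ P - 2 * P))
        (fun i => coeff i (X * d⁄dX ℚ P - 2 * P))
        (by intro i hi h; show coeff i _ = 0; rw [hQ]; exact hQQ i hi h)
        (by intro i hi h; show coeff i _ = 0; rw [hQ]; exact hQQ i hi h)
      rw [this]
      simp only [hQ, hc0]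
      push_cast
      ring
    -- coeff n of RHS
    have hR : coeff n (4 * P ^ 3 - 4 * X ^ 6) = 12 * coeff n P := by
      have hn6 : n ≠ 6 := by rintro rfl; exact h6 dvd_rfl
      rw [map_sub]
      have h1 : coeff n (4 * P ^ 3) = 4 * coeff n (P ^ 3) := by
        have : (4 : ℚ⟦X⟧) = C 4 := (map_ofNat C 4).symm
        rw [this, coeff_C_mul]
      have h2 : coeff n ((4 : ℚ⟦X⟧) * X ^ 6) = 0 := by
        have : (4 : ℚ⟦X⟧) = C 4 := (map_ofNat C 4).symm
        rw [this, coeff_C_mul, coeff_X_pow, if_neg hn6, mul_zero]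
      rw [h1, h2, hP3]; ring
    have heq : (-4 * (n : ℚ) + 8) * coeff n P = 12 * coeff n P := by
      rw [← hL, ← hR, hode]
    have : (4 * (n : ℚ) + 4) * coeff n P = 0 := by linarith
    have hne : (4 * (n : ℚ) + 4) ≠ 0 := by positivity
    exact (mul_eq_zero.mp this).resolve_left hne
end

section
/- There is a unique formal Laurent series $x(u) \in \mathbb{Q}((u))$ of the form $x(u) = u^{-2} + O(u)$ satisfying the differential equation $x(u)^2 x'(u)^2 = 4 x(u)^5 - 4$. -/
open PowerSeries

noncomputable section HypAux

namespace HypAux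

/-- The nonlinear part of the equation, as a polynomial expression in `A = P - 1`
and `B = X * P'`. -/
def Np (A B : ℚ⟦X⟧) : ℚ⟦X⟧ :=
  B^2 - 12*A*B + 2*A*B^2 - 16*A^2 - 12*A^2*B + A^2*B^2 - 24*A^3 - 4*A^3*B - 16*A^4 - 4*A^5

/-- The nonlinear part, applied to a power series `q` with `B = X * q'`. -/
def Nf (q : ℚ⟦X⟧) : ℚ⟦X⟧ := Np q (X * d⁄dX ℚ q)

lemma main_ident (P B : ℚ⟦X⟧) :
    P^2*(B - 2*P)^2 - 4*P^5 = -(4*(P-1)) - 4*B + Np (P-1) B := by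
  simp only [Np]; ring

lemma diff_ident (A1 B1 A2 B2 : ℚ⟦X⟧) :
    Np A1 B1 - Np A2 B2 =
      (A1 - A2) *
        (A1 * (-16 - 24*A2 - 16*A2^2 - 4*A2^3 - 12*B1 - 4*B1*A2 + B1^2 - 24*A1
                - 16*A1*A2 - 4*A1*A2^2 - 4*A1*B1 - 16*A1^2 - 4*A1^2*A2 - 4*A1^3)
          + A2 * (-16 - 24*A2 - 16*A2^2 - 4*A2^3 - 12*B1 - 4*B1*A2 + B1^2)
          + B1 * (-12 + 2*B1))
      + (B1 - B2) *
        (A2 * (-12 + 2*B2 - 12*A2 + A2*B2 - 4*A2^2 + 2*B1 + B1*A2) + B1 * 1 + B2 * 1) := by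
  simp only [Np]; ring

lemma X_pow_dvd_X_mul_deriv (n : ℕ) (f : ℚ⟦X⟧) (h : (X : ℚ⟦X⟧)^n ∣ f) :
    (X : ℚ⟦X⟧)^n ∣ X * d⁄dX ℚ f := by
  rw [X_pow_dvd_iff] at h ⊢
  intro m hm
  match m with
  | 0 => simp
  | (k+1) =>
      rw [coeff_succ_X_mul, coeff_derivative, h (k+1) (by omega), zero_mul]

/-- Key independence lemma: the `n`-th coefficient of `Nf q` only depends on the
coefficients of `q` below `n` (for series of order `≥ 3`). -/
lemma indep (n : ℕ) (q r : ℚ⟦X⟧) (hq : (X : ℚ⟦X⟧)^3 ∣ q) (hr : (X : ℚ⟦X⟧)^3 ∣ r)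
    (h : ∀ i < n, coeff i q = coeff i r) :
    coeff n (Nf q) = coeff n (Nf r) := by
  have hd : (X : ℚ⟦X⟧)^n ∣ (q - r) := by
    rw [X_pow_dvd_iff]
    intro m hm
    rw [map_sub, h m hm, sub_self]
  have hB : (X : ℚ⟦X⟧)^n ∣ (X * d⁄dX ℚ q - X * d⁄dX ℚ r) := by
    have : X * d⁄dX ℚ q - X * d⁄dX ℚ r = X * d⁄dX ℚ (q - r) := by
      rw [map_sub, mul_sub]
    rw [this]
    exact X_pow_dvd_X_mul_deriv n _ hd
  have hBq : (X : ℚ⟦X⟧)^3 ∣ X * d⁄dX ℚ q := X_pow_dvd_X_mul_deriv 3 q hq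
  have hBr : (X : ℚ⟦X⟧)^3 ∣ X * d⁄dX ℚ r := X_pow_dvd_X_mul_deriv 3 r hr
  have key : (X : ℚ⟦X⟧)^(n+3) ∣ (Nf q - Nf r) := by
    rw [Nf, Nf, diff_ident]
    rw [pow_add]
    refine dvd_add (mul_dvd_mul hd ?_) (mul_dvd_mul hB ?_)
    · exact dvd_add (dvd_add (hq.mul_right _) (hr.mul_right _)) (hBq.mul_right _)
    · exact dvd_add (dvd_add (hr.mul_right _) (hBq.mul_right _)) (hBr.mul_right _)
  have key2 : (X : ℚ⟦X⟧)^(n+1) ∣ (Nf q - Nf r) :=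
    dvd_trans (pow_dvd_pow X (by omega)) key
  have := (X_pow_dvd_iff.1 key2) n (by omega)
  rw [map_sub, sub_eq_zero] at this
  exact this

lemma coeff_lhs (n : ℕ) (f : ℚ⟦X⟧) :
    coeff n (4*f + 4*(X * d⁄dX ℚ f)) = 4*(n+1)*coeff n f := by
  have h4 : (4 : ℚ⟦X⟧) = C (4:ℚ) := by
    rw [map_ofNat]
  rw [map_add, h4, coeff_C_mul, coeff_C_mul]
  match n with
  | 0 => simp
  | (k+1) =>
      rw [coeff_succ_X_mul, coeff_derivative]
      push_cast
      ring

/-- The coefficients of the solution, defined by recursion. -/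
def a : ℕ → ℚ
  | n => (coeff n (4*X^10 + Nf (mk fun m => if h : m < n then a m else 0))) / (4*((n:ℚ)+1))
  termination_by n => n
  decreasing_by exact h

lemma a_def (n : ℕ) : a n =
    (coeff n (4*X^10 + Nf (mk fun m => if _ : m < n then a m else 0))) / (4*((n:ℚ)+1)) := by
  rw [a]

lemma Nf_zero : Nf 0 = 0 := by
  rw [Nf, map_zero, mul_zero]
  simp [Np]

lemma coeff_4X10 (k : ℕ) : coeff k (4*X^10 : ℚ⟦X⟧) = if k = 10 then 4 else 0 := by
  have h4 : (4 : ℚ⟦X⟧) = C (4:ℚ) := by rw [map_ofNat]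
  rw [h4, coeff_C_mul, coeff_X_pow]
  split <;> simp

lemma a_small : ∀ n < 3, a n = 0 := by
  intro n hn
  induction n using Nat.strong_induction_on with
  | _ n ih =>
    have htr : (mk fun m => if _ : m < n then a m else 0) = (0 : ℚ⟦X⟧) := by
      ext k
      rw [coeff_mk, map_zero]
      split
      · exact ih k (by omega) (by omega)
      · rfl
    rw [a_def, htr, Nf_zero, add_zero, coeff_4X10, if_neg (by omega), zero_div]

/-- The solution minus 1. -/
def q : ℚ⟦X⟧ := mk a

lemma q_small : ∀ i < 3, coeff i q = 0 := by
  intro i hi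
  rw [q, coeff_mk]
  exact a_small i hi

lemma q_dvd : (X : ℚ⟦X⟧)^3 ∣ q := X_pow_dvd_iff.2 q_small

lemma q_eq : 4*q + 4*(X * d⁄dX ℚ q) = 4*X^10 + Nf q := by
  ext n
  rw [coeff_lhs]
  have hq : coeff n q = a n := coeff_mk n a
  set T : ℚ⟦X⟧ := mk fun m => if _ : m < n then a m else 0 with hT
  have hTdvd : (X : ℚ⟦X⟧)^3 ∣ T := by
    rw [X_pow_dvd_iff]
    intro m hm
    rw [hT, coeff_mk]
    split
    · exact a_small m hm
    · rfl
  have hind : coeff n (Nf q) = coeff n (Nf T) := by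
    refine indep n q T q_dvd hTdvd ?_
    intro i hi
    rw [q, coeff_mk, hT, coeff_mk, dif_pos hi]
  have hne : (4*((n:ℚ)+1)) ≠ 0 := by positivity
  rw [map_add, hind, hq, a_def n, ← hT, mul_comm, div_mul_cancel₀ _ hne, map_add]

/-- Any solution of the original equation yields a solution of the reduced equation. -/
lemma sol_spec (P : ℚ⟦X⟧)
    (heq : P ^ 2 * (X * d⁄dX ℚ P - 2 * P) ^ 2 = 4 * P ^ 5 - 4 * X ^ 10) :
    4*(P-1) + 4*(X * d⁄dX ℚ (P-1)) = 4*X^10 + Nf (P-1) := by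
  have hder : d⁄dX ℚ (P - 1) = d⁄dX ℚ P := by
    rw [map_sub, Derivation.map_one_eq_zero, sub_zero]
  have h := main_ident P (X * d⁄dX ℚ P)
  rw [Nf, hder]
  linear_combination h - heq

lemma unique_aux (q1 q2 : ℚ⟦X⟧)
    (h1 : ∀ i < 3, coeff i q1 = 0) (h2 : ∀ i < 3, coeff i q2 = 0)
    (e1 : 4*q1 + 4*(X * d⁄dX ℚ q1) = 4*X^10 + Nf q1)
    (e2 : 4*q2 + 4*(X * d⁄dX ℚ q2) = 4*X^10 + Nf q2) : q1 = q2 := by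
  have key : ∀ n, coeff n q1 = coeff n q2 := by
    intro n
    induction n using Nat.strong_induction_on with
    | _ n ih =>
      have hi : coeff n (Nf q1) = coeff n (Nf q2) :=
        indep n q1 q2 (X_pow_dvd_iff.2 h1) (X_pow_dvd_iff.2 h2) ih
      have c1 : 4*((n:ℚ)+1)*coeff n q1 = coeff n (4*X^10) + coeff n (Nf q1) := by
        rw [← coeff_lhs, e1, map_add]
      have c2 : 4*((n:ℚ)+1)*coeff n q2 = coeff n (4*X^10) + coeff n (Nf q2) := by
        rw [← coeff_lhs, e2, map_add]
      have hne : (4*((n:ℚ)+1)) ≠ 0 := by positivity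
      have : 4*((n:ℚ)+1)*coeff n q1 = 4*((n:ℚ)+1)*coeff n q2 := by
        rw [c1, c2, hi]
      exact mul_left_cancel₀ hne this
  exact PowerSeries.ext key

end HypAux

end HypAux

/-- There is a unique formal Laurent series `x(u) = u⁻² + O(u)` over `ℚ`
satisfying `x² x'² = 4x⁵ - 4`.  Writing `x(u) = P(u)/u²` with `P ∈ ℚ⟦u⟧`,
the conditions become `P(0) = 1`, the coefficients of `u` and `u²` in `P`
vanish (no `u⁻¹` or `u⁰` term in `x`), and
`P² (u P' - 2P)² = 4P⁵ - 4u¹⁰`. -/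
theorem exists_unique_solution :
    ∃! P : ℚ⟦X⟧,
      constantCoeff P = 1 ∧ coeff 1 P = 0 ∧ coeff 2 P = 0 ∧
      P ^ 2 * (X * d⁄dX ℚ P - 2 * P) ^ 2 = 4 * P ^ 5 - 4 * X ^ 10 := by
  refine ⟨1 + HypAux.q, ⟨?_, ?_, ?_, ?_⟩, ?_⟩
  · rw [map_add, map_one, ← coeff_zero_eq_constantCoeff_apply, HypAux.q_small 0 (by omega)]
    simp
  · rw [map_add, coeff_one, HypAux.q_small 1 (by omega)]
    simp
  · rw [map_add, coeff_one, HypAux.q_small 2 (by omega)]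
    simp
  · set P : ℚ⟦X⟧ := 1 + HypAux.q with hP
    have hder : d⁄dX ℚ P = d⁄dX ℚ HypAux.q := by
      rw [hP, map_add, Derivation.map_one_eq_zero, zero_add]
    have h := HypAux.main_ident P (X * d⁄dX ℚ P)
    have hq : P - 1 = HypAux.q := by rw [hP]; ring
    rw [hq, hder] at h
    rw [hder]
    have h2 := HypAux.q_eq
    rw [HypAux.Nf] at h2
    linear_combination h - h2
  · rintro P' ⟨h0, h1, h2, heq⟩
    have hs := HypAux.sol_spec P' heq
    have hsmall : ∀ i < 3, coeff i (P' - 1) = 0 := by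
      intro i hi
      interval_cases i
      · rw [map_sub, coeff_zero_eq_constantCoeff_apply, h0]
        simp
      · rw [map_sub, h1, coeff_one]
        simp
      · rw [map_sub, h2, coeff_one]
        simp
    have := HypAux.unique_aux (P' - 1) HypAux.q hsmall HypAux.q_small hs HypAux.q_eq
    rw [sub_eq_iff_eq_add] at this
    rw [this]
    ring
end

section
/- Let $x(u) \in \mathbb{Q}((u))$ be the unique Laurent series solution of $x(u)^2 x'(u)^2 = 4x(u)^5 - 4$ with $x(u) = u^{-2} + O(u)$. Then the coefficient of $u^{k-2}$ in $x(u)$ vanishes unless $10 \mid k$; i.e., one can write $x(u) = u^{-2} + \sum_{n\ge 1} \frac{C_{10n}}{10n}\frac{u^{10n-2}}{(10n)!}$ for rationals $C_{10n}$. -/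
open PowerSeries

section helpers

variable {K : Type*} [CommRing K]

lemma coeff_mul_right_vanish {n : ℕ} {S : K⟦X⟧}
    (h : ∀ i < n, coeff i S = 0) (T : K⟦X⟧) {j : ℕ} (hj : j ≤ n) :
    coeff j (T * S) = constantCoeff T * coeff j S := by
  rw [coeff_mul, Finset.sum_eq_single (0, j)]
  · simp [coeff_zero_eq_constantCoeff]
  · rintro ⟨a, b⟩ hab hne
    have hb : a + b = j := Finset.HasAntidiagonal.mem_antidiagonal.mp hab
    have ha : a ≠ 0 := by rintro rfl; simp at hb; exact hne (by simp [hb])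
    have : b < n := by omega
    rw [h b this, mul_zero]
  · intro habs
    exact absurd (Finset.HasAntidiagonal.mem_antidiagonal.mpr (by simp)) habs

lemma coeff_mul_left_vanish {n : ℕ} {S : K⟦X⟧}
    (h : ∀ i < n, coeff i S = 0) (T : K⟦X⟧) {j : ℕ} (hj : j ≤ n) :
    coeff j (S * T) = constantCoeff T * coeff j S := by
  rw [mul_comm]; exact coeff_mul_right_vanish h T hj

lemma coeff_X_mul_dX (f : K⟦X⟧) (i : ℕ) :
    coeff i (X * d⁄dX K f) = (i : K) * coeff i f := by
  cases i with
  | zero =>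
    simp [coeff_zero_eq_constantCoeff]
  | succ m =>
    rw [coeff_succ_X_mul, coeff_derivative]
    push_cast; ring

/-- Uniqueness of the solution, given constant term 1. -/
lemma ode_unique {K : Type*} [Field K] [CharZero K] (P Q : K⟦X⟧)
    (hP0 : constantCoeff P = 1) (hQ0 : constantCoeff Q = 1)
    (hodeP : P ^ 2 * (X * d⁄dX K P - 2 * P) ^ 2 = 4 * P ^ 5 - 4 * X ^ 10)
    (hodeQ : Q ^ 2 * (X * d⁄dX K Q - 2 * Q) ^ 2 = 4 * Q ^ 5 - 4 * X ^ 10) :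
    P = Q := by
  by_contra hne
  classical
  set D := P - Q with hD
  have hD0 : D ≠ 0 := sub_ne_zero.mpr hne
  have hex : ∃ n, coeff n D ≠ 0 := by
    by_contra hc
    push_neg at hc
    exact hD0 (PowerSeries.ext hc)
  set n := Nat.find hex with hn
  have hdn : coeff n D ≠ 0 := Nat.find_spec hex
  have hlt : ∀ i < n, coeff i D = 0 := fun i hi => by
    by_contra hc; exact absurd (Nat.find_le hc) (not_le.mpr hi)
  set RP := X * d⁄dX K P - 2 * P with hRP
  set RQ := X * d⁄dX K Q - 2 * Q with hRQ
  set S := X * d⁄dX K D - 2 * D with hS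
  set A := P * RP with hA
  set B := Q * RQ with hB
  set E := P^4 + P^3*Q + P^2*Q^2 + P*Q^3 + Q^4 with hE
  -- the key identity
  have key : (A - B) * (A + B) = 4 * (D * E) := by
    have : A ^ 2 - B ^ 2 = 4 * (D * E) := by
      have h2 : A ^ 2 = 4 * P ^ 5 - 4 * X ^ 10 := by
        rw [hA, mul_pow, hodeP]
      have h3 : B ^ 2 = 4 * Q ^ 5 - 4 * X ^ 10 := by
        rw [hB, mul_pow, hodeQ]
      rw [h2, h3, hD, hE]; ring
    linear_combination this
  -- rewrite A - B
  have hdXD : d⁄dX K D = d⁄dX K P - d⁄dX K Q := map_sub _ _ _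
  have hAB : A - B = P * S + RQ * D := by
    rw [hA, hB, hS, hD, hRP, hRQ, hdXD]; ring
  -- coefficients of S
  have hScoeff : ∀ i, coeff i S = ((i : K) - 2) * coeff i D := by
    intro i
    rw [hS, two_mul, map_sub, map_add, coeff_X_mul_dX]
    ring
  have hSlt : ∀ i < n, coeff i S = 0 := fun i hi => by
    rw [hScoeff i, hlt i hi, mul_zero]
  -- constant coefficients
  have hcRP : constantCoeff RP = -2 := by
    simp [hRP, map_sub, map_mul, constantCoeff_X, hP0, map_ofNat]
  have hcRQ : constantCoeff RQ = -2 := by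
    simp [hRQ, map_sub, map_mul, constantCoeff_X, hQ0, map_ofNat]
  have hcAB : constantCoeff (A + B) = -4 := by
    simp [hA, hB, map_add, map_mul, hcRP, hcRQ, hP0, hQ0]
    ring
  have hcE : constantCoeff E = 5 := by
    simp [hE, map_add, map_mul, map_pow, hP0, hQ0]
    ring
  -- coefficients of A - B below and at n
  have hABle : ∀ j ≤ n, coeff j (A - B) =
      ((j : K) - 2) * coeff j D + (-2) * coeff j D := by
    intro j hj
    rw [hAB, map_add, coeff_mul_right_vanish hSlt P hj,
      coeff_mul_right_vanish hlt RQ hj, hP0, hcRQ, hScoeff, one_mul]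
  have hABlt : ∀ i < n, coeff i (A - B) = 0 := fun i hi => by
    rw [hABle i (le_of_lt hi), hlt i hi]; ring
  -- take coeff n of the key identity
  have hL : coeff n ((A - B) * (A + B)) =
      (-4) * (((n : K) - 2) * coeff n D + (-2) * coeff n D) := by
    rw [coeff_mul_left_vanish hABlt (A + B) le_rfl, hcAB, hABle n le_rfl]
  have hR : coeff n (4 * (D * E)) = 4 * (5 * coeff n D) := by
    rw [show (4 : K⟦X⟧) * (D * E) = D * E + D * E + D * E + D * E by ring,
      map_add, map_add, map_add, coeff_mul_left_vanish hlt E le_rfl, hcE]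
    ring
  have hkey := congrArg (coeff n) key
  rw [hL, hR] at hkey
  have : ((n : K) + 1) * coeff n D = 0 := by linear_combination (-1/4 : K) * hkey
  rcases mul_eq_zero.mp this with h | h
  · exact Nat.cast_add_one_ne_zero n h
  · exact hdn h

end helpers

lemma map_dX {K : Type*} [CommRing K] (ι : ℚ →+* K) (f : ℚ⟦X⟧) :
    PowerSeries.map ι (d⁄dX ℚ f) = d⁄dX K (PowerSeries.map ι f) := by
  ext n
  rw [coeff_map, coeff_derivative, coeff_derivative, coeff_map, map_mul]
  simp

/-- For the unique Laurent series solution `x(u) = u⁻² + O(u)` of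
`x² x'² = 4x⁵ - 4` (written as `x = P/u²` with `P ∈ ℚ⟦u⟧`), the coefficient
of `u^(k-2)` in `x` (i.e. of `u^k` in `P`) vanishes unless `10 ∣ k`; thus
`x(u) = u⁻² + ∑_{n≥1} (C_{10n}/(10n)) u^(10n-2)/(10n)!` for rationals `C_{10n}`. -/
theorem coeff_vanish_unless_ten_dvd (P : ℚ⟦X⟧)
    (h0 : constantCoeff P = 1) (h1 : coeff 1 P = 0) (h2 : coeff 2 P = 0)
    (hode : P ^ 2 * (X * d⁄dX ℚ P - 2 * P) ^ 2 = 4 * P ^ 5 - 4 * X ^ 10) :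
    (∀ k : ℕ, 0 < k → ¬ (10 ∣ k) → coeff k P = 0) ∧
    ∃ C : ℕ → ℚ, ∀ n : ℕ, 0 < n →
      coeff (10 * n) P = C n / (10 * n) * (1 / (10 * n).factorial) := by
  constructor
  · intro k hk hdvd
    set K := CyclotomicField 10 ℚ with hK
    set ι := algebraMap ℚ K with hι
    haveI : IsCyclotomicExtension {10} ℚ K := CyclotomicField.isCyclotomicExtension 10 ℚ
    have hζ : IsPrimitiveRoot (IsCyclotomicExtension.zeta 10 ℚ K) ((10 : ℕ+) : ℕ) :=
      IsCyclotomicExtension.zeta_spec 10 ℚ K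
    set ζ := IsCyclotomicExtension.zeta 10 ℚ K with hzeta
    have hζ10 : ζ ^ (10 : ℕ) = 1 := by
      simpa using hζ.pow_eq_one
    set P₁ : K⟦X⟧ := PowerSeries.map ι P with hP₁
    set P₂ : K⟦X⟧ := rescale ζ P₁ with hP₂
    -- transported hypotheses
    have h0₁ : constantCoeff P₁ = 1 := by
      rw [hP₁, ← coeff_zero_eq_constantCoeff, coeff_map,
        coeff_zero_eq_constantCoeff, h0, map_one]
    have hode₁ : P₁ ^ 2 * (X * d⁄dX K P₁ - 2 * P₁) ^ 2 = 4 * P₁ ^ 5 - 4 * X ^ 10 := by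
      have := congrArg (PowerSeries.map ι) hode
      simpa only [map_mul, map_sub, map_pow, map_ofNat, PowerSeries.map_X,
        map_dX] using this
    have hXd : rescale ζ (X * d⁄dX K P₁) = X * d⁄dX K P₂ := by
      ext n
      rw [coeff_rescale, coeff_X_mul_dX, coeff_X_mul_dX, hP₂, coeff_rescale]
      ring
    have hX10 : rescale ζ ((X : K⟦X⟧) ^ 10) = X ^ 10 := by
      ext n
      rw [coeff_rescale, coeff_X_pow]
      split_ifs with h
      · subst h; rw [hζ10, one_mul]
      · rw [mul_zero]
    have h0₂ : constantCoeff P₂ = 1 := by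
      rw [hP₂, ← coeff_zero_eq_constantCoeff, coeff_rescale, pow_zero, one_mul,
        coeff_zero_eq_constantCoeff, h0₁]
    have hode₂ : P₂ ^ 2 * (X * d⁄dX K P₂ - 2 * P₂) ^ 2 = 4 * P₂ ^ 5 - 4 * X ^ 10 := by
      have := congrArg (rescale ζ) hode₁
      simpa only [map_mul, map_sub, map_pow, map_ofNat, hXd, hX10] using this
    have heq : P₂ = P₁ := ode_unique P₂ P₁ h0₂ h0₁ hode₂ hode₁
    have hcoeff := congrArg (coeff k) heq
    rw [hP₂, coeff_rescale] at hcoeff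
    by_contra hc
    have hι0 : ι (coeff k P) ≠ 0 := fun h =>
      hc (RingHom.injective ι (by rw [h, map_zero]))
    have hck : coeff k P₁ = ι (coeff k P) := by rw [hP₁, coeff_map]
    rw [hck] at hcoeff
    have hζk : ζ ^ k = 1 := by
      have := mul_right_cancel₀ hι0 (hcoeff.trans (one_mul _).symm)
      exact this
    have : ((10 : ℕ+) : ℕ) ∣ k := (hζ.pow_eq_one_iff_dvd k).mp hζk
    exact hdvd (by simpa using this)
  · refine ⟨fun n => coeff (10 * n) P * (10 * n) * (10 * n).factorial, fun n hn => ?_⟩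
    have h1 : ((10 * n : ℕ) : ℚ) ≠ 0 := by positivity
    have h2 : ((10 * n).factorial : ℚ) ≠ 0 := by
      exact_mod_cast (10 * n).factorial_ne_zero
    field_simp
end

section
/- Let $x(u) = u^{-2} + \sum_{k \ge 1} c_k u^{k-2}$ be the unique Laurent series solution over $\mathbb{Q}$ of $x(u)^2 x'(u)^2 = 4x(u)^5 - 4$. Substituting the ansatz and equating coefficients yields a recursion determining each $c_k$ uniquely from $c_1, \dots, c_{k-1}$; in particular all $c_k$ are rational and $c_1 = c_2 = \cdots = c_9 = 0$ while $c_{10} \ne 0$. -/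
open PowerSeries

noncomputable def FF (P : ℚ⟦X⟧) : ℚ⟦X⟧ := P ^ 2 * (X * d⁄dX ℚ P - 2 * P) ^ 2 - 4 * P ^ 5

lemma Xd_X_pow (n : ℕ) : (X : ℚ⟦X⟧) * d⁄dX ℚ ((X : ℚ⟦X⟧) ^ n) = (n : ℚ⟦X⟧) * X ^ n := by
  induction n with
  | zero => simp
  | succ n ih =>
    rw [pow_succ, Derivation.leibniz]
    push_cast
    simp only [smul_eq_mul, derivative_X]
    calc X * ((X:ℚ⟦X⟧) ^ n * 1 + X * d⁄dX ℚ (X ^ n))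
        = X ^ n * X + (X * d⁄dX ℚ (X ^ n)) * X := by ring
      _ = (↑n + 1) * X ^ (n + 1) := by rw [ih]; ring

lemma keyL (A B : ℚ⟦X⟧) (hA : constantCoeff A = 1) (hB : constantCoeff B = 1)
    (n : ℕ) (h : ∀ j, j < n → coeff j A = coeff j B) :
    coeff n (FF A) - coeff n (FF B) = -(4 * (n + 1)) * (coeff n A - coeff n B) := by
  obtain ⟨S, hS⟩ : (X : ℚ⟦X⟧) ^ n ∣ A - B := by
    rw [X_pow_dvd_iff]; intro m hm; simp [h m hm]
  have hA' : A = B + X ^ n * S := by rw [← hS]; ring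
  set QA := (X : ℚ⟦X⟧) * d⁄dX ℚ A - 2 * A with hQA
  set QB := (X : ℚ⟦X⟧) * d⁄dX ℚ B - 2 * B with hQB
  set T : ℚ⟦X⟧ := ((n : ℚ⟦X⟧) - 2) * S + X * d⁄dX ℚ S with hT
  have hq : QA = QB + X ^ n * T := by
    rw [hQA, hQB, hT, hA', map_add, Derivation.leibniz]
    simp only [smul_eq_mul]
    linear_combination S * Xd_X_pow n
  have h2 : constantCoeff (2 : ℚ⟦X⟧) = 2 := by
    have : ((2:ℚ⟦X⟧)) = C 2 := by simp [map_ofNat]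
    rw [this, constantCoeff_C]
  set G : ℚ⟦X⟧ := S * (A + B) * QA ^ 2 + B ^ 2 * T * (QA + QB)
      - 4 * S * (A ^ 4 + A ^ 3 * B + A ^ 2 * B ^ 2 + A * B ^ 3 + B ^ 4) with hGdef
  have hG : FF A - FF B = X ^ n * G := by
    simp only [FF]
    rw [← hQA, ← hQB, hGdef, hA', hq]
    ring
  have hc : coeff n (FF A) - coeff n (FF B) = constantCoeff G := by
    rw [← map_sub, hG, ← coeff_zero_eq_constantCoeff_apply]
    simpa using coeff_X_pow_mul G n 0
  have hS0 : constantCoeff S = coeff n A - coeff n B := by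
    have := coeff_X_pow_mul S n 0
    rw [← hS, map_sub] at this
    simpa using this.symm
  have hQA0 : constantCoeff QA = -2 := by
    rw [hQA]; simp [hA, h2]
  have hQB0 : constantCoeff QB = -2 := by
    rw [hQB]; simp [hB, h2]
  have hT0 : constantCoeff T = ((n : ℚ) - 2) * constantCoeff S := by
    rw [hT]; simp [h2]
  rw [hc, hGdef]
  simp only [map_add, map_sub, map_mul, map_pow, map_ofNat, hQA0, hQB0, hT0, hS0, hA, hB, h2]
  push_cast
  ring

lemma FF_one : FF 1 = 0 := by
  simp only [FF]
  rw [Derivation.map_one_eq_zero]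
  ring

/-- truncation sequence -/
noncomputable def TT : ℕ → ℚ⟦X⟧
  | 0 => 1
  | (n+1) => TT n +
      (C ((coeff n (FF (TT n)) + 4 * coeff n ((X : ℚ⟦X⟧) ^ 10)) / (4 * (n + 1)))) * X ^ n

noncomputable def PP : ℚ⟦X⟧ := PowerSeries.mk fun n => coeff n (TT (n + 1))

lemma coeff_PP (n : ℕ) : coeff n PP = coeff n (TT (n + 1)) := coeff_mk n _

lemma coeff_PP_eq (m n : ℕ) (h : m < n) : coeff m PP = coeff m (TT n) := by
  induction n, h using Nat.le_induction with
  | base => exact coeff_PP m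
  | succ n hn ih =>
    have hmn : m ≠ n := by omega
    rw [ih, TT]
    simp [coeff_X_pow, hmn]

lemma TT_one : TT 1 = 1 := by
  show TT 0 + _ = 1
  rw [show TT 0 = 1 from rfl, FF_one]
  norm_num

lemma constCoeff_TT (n : ℕ) : constantCoeff (TT n) = 1 := by
  induction n with
  | zero => simp [TT]
  | succ n ih =>
    rcases Nat.eq_zero_or_pos n with h | h
    · subst h; rw [TT_one]; simp
    · rw [TT, map_add, ih, map_mul]
      obtain ⟨m, rfl⟩ := Nat.exists_eq_add_of_le h
      simp [pow_succ]

lemma constCoeff_PP : constantCoeff PP = 1 := by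
  rw [← coeff_zero_eq_constantCoeff_apply, coeff_PP, coeff_zero_eq_constantCoeff_apply,
    constCoeff_TT]

lemma coeff_TT_self (n : ℕ) :
    coeff n (TT (n + 1)) = coeff n (TT n)
      + (coeff n (FF (TT n)) + 4 * coeff n ((X : ℚ⟦X⟧) ^ 10)) / (4 * (n + 1)) := by
  rw [TT]
  simp [coeff_X_pow]

lemma FF_PP : FF PP = -(4 : ℚ⟦X⟧) * X ^ 10 := by
  ext n
  have hkey := keyL PP (TT n) constCoeff_PP (constCoeff_TT n) n
    (fun j hj => coeff_PP_eq j n hj)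
  have hc : coeff n PP - coeff n (TT n)
      = (coeff n (FF (TT n)) + 4 * coeff n ((X : ℚ⟦X⟧) ^ 10)) / (4 * (n + 1)) := by
    rw [coeff_PP, coeff_TT_self]; ring
  rw [hc] at hkey
  have h4 : (4 : ℚ) * (n + 1) ≠ 0 := by positivity
  have hdiv : -(4 * ((n : ℚ) + 1)) * ((coeff n (FF (TT n)) + 4 * coeff n ((X : ℚ⟦X⟧) ^ 10))
      / (4 * (n + 1))) = -(coeff n (FF (TT n)) + 4 * coeff n ((X : ℚ⟦X⟧) ^ 10)) := by
    field_simp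
  rw [hdiv] at hkey
  have hfour : ((4 : ℚ⟦X⟧)) = C 4 := by
    simp [map_ofNat]
  have hgoal : coeff n (-(4 : ℚ⟦X⟧) * X ^ 10) = -(4 * coeff n ((X : ℚ⟦X⟧) ^ 10)) := by
    rw [neg_mul, map_neg, hfour, coeff_C_mul]
  rw [hgoal]
  linarith [hkey]

lemma TT_eq_one : ∀ n, n ≤ 10 → TT n = 1 := by
  intro n hn
  induction n with
  | zero => rfl
  | succ n ih =>
    have h1 : TT n = 1 := ih (by omega)
    rw [TT, h1, FF_one]
    have hx : coeff n ((X : ℚ⟦X⟧) ^ 10) = 0 := by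
      rw [coeff_X_pow]
      simp only [if_neg (by omega : n ≠ 10)]
    simp [hx]

lemma coeff_PP_lowzero (k : ℕ) (h1 : 1 ≤ k) (h9 : k ≤ 9) : coeff k PP = 0 := by
  rw [coeff_PP, TT_eq_one (k + 1) (by omega)]
  rw [coeff_one, if_neg (by omega : ¬ k = 0)]

lemma coeff_PP_ten : coeff 10 PP = 1 / 11 := by
  rw [coeff_PP]
  show coeff 10 (TT 10 + _) = 1 / 11
  rw [TT_eq_one 10 le_rfl, FF_one]
  simp [coeff_X_pow, coeff_one]
  norm_num

/-- The solution of `x² x'² = 4x⁵ - 4` with `x = u⁻² + ∑_{k≥1} c_k u^(k-2)`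
(written `x = P/u²`, `c_k` = coefficient of `u^k` in `P`): the coefficient
equations determine each `c_k` uniquely from `c_1, …, c_{k-1}`, the solution
exists and is unique, and `c_1 = ⋯ = c_9 = 0` while `c_{10} ≠ 0`. -/
theorem recursion_determines_coefficients :
    (∃! P : ℚ⟦X⟧,
      constantCoeff P = 1 ∧ coeff 1 P = 0 ∧ coeff 2 P = 0 ∧
      P ^ 2 * (X * d⁄dX ℚ P - 2 * P) ^ 2 = 4 * P ^ 5 - 4 * X ^ 10) ∧
    (∀ P₁ P₂ : ℚ⟦X⟧,
      (constantCoeff P₁ = 1 ∧ coeff 1 P₁ = 0 ∧ coeff 2 P₁ = 0 ∧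
        P₁ ^ 2 * (X * d⁄dX ℚ P₁ - 2 * P₁) ^ 2 = 4 * P₁ ^ 5 - 4 * X ^ 10) →
      (constantCoeff P₂ = 1 ∧ coeff 1 P₂ = 0 ∧ coeff 2 P₂ = 0 ∧
        P₂ ^ 2 * (X * d⁄dX ℚ P₂ - 2 * P₂) ^ 2 = 4 * P₂ ^ 5 - 4 * X ^ 10) →
      ∀ k : ℕ, (∀ j, j < k → coeff j P₁ = coeff j P₂) →
        coeff k P₁ = coeff k P₂) ∧
    (∀ P : ℚ⟦X⟧,
      (constantCoeff P = 1 ∧ coeff 1 P = 0 ∧ coeff 2 P = 0 ∧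
        P ^ 2 * (X * d⁄dX ℚ P - 2 * P) ^ 2 = 4 * P ^ 5 - 4 * X ^ 10) →
      (∀ k, 1 ≤ k → k ≤ 9 → coeff k P = 0) ∧ coeff 10 P ≠ 0) := by
  have heq : ∀ P : ℚ⟦X⟧,
      P ^ 2 * (X * d⁄dX ℚ P - 2 * P) ^ 2 = 4 * P ^ 5 - 4 * X ^ 10 →
      FF P = -(4 : ℚ⟦X⟧) * X ^ 10 := by
    intro P h
    simp only [FF]
    linear_combination h
  have huniq : ∀ P₁ P₂ : ℚ⟦X⟧,
      (constantCoeff P₁ = 1 ∧ coeff 1 P₁ = 0 ∧ coeff 2 P₁ = 0 ∧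
        P₁ ^ 2 * (X * d⁄dX ℚ P₁ - 2 * P₁) ^ 2 = 4 * P₁ ^ 5 - 4 * X ^ 10) →
      (constantCoeff P₂ = 1 ∧ coeff 1 P₂ = 0 ∧ coeff 2 P₂ = 0 ∧
        P₂ ^ 2 * (X * d⁄dX ℚ P₂ - 2 * P₂) ^ 2 = 4 * P₂ ^ 5 - 4 * X ^ 10) →
      ∀ k : ℕ, (∀ j, j < k → coeff j P₁ = coeff j P₂) →
        coeff k P₁ = coeff k P₂ := by
    intro P₁ P₂ h1 h2 k hk
    have hkk := keyL P₁ P₂ h1.1 h2.1 k hk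
    rw [heq P₁ h1.2.2.2, heq P₂ h2.2.2.2, sub_self] at hkk
    have h4 : (4 : ℚ) * ((k : ℚ) + 1) ≠ 0 := by positivity
    have := (mul_eq_zero.mp hkk.symm).resolve_left (by simpa using h4)
    linarith [this]
  have hPPeq : PP ^ 2 * (X * d⁄dX ℚ PP - 2 * PP) ^ 2 = 4 * PP ^ 5 - 4 * X ^ 10 := by
    have := FF_PP
    simp only [FF] at this
    linear_combination this
  have hPPprop : constantCoeff PP = 1 ∧ coeff 1 PP = 0 ∧ coeff 2 PP = 0 ∧
      PP ^ 2 * (X * d⁄dX ℚ PP - 2 * PP) ^ 2 = 4 * PP ^ 5 - 4 * X ^ 10 :=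
    ⟨constCoeff_PP, coeff_PP_lowzero 1 le_rfl (by norm_num),
      coeff_PP_lowzero 2 (by norm_num) (by norm_num), hPPeq⟩
  have hext : ∀ P : ℚ⟦X⟧,
      (constantCoeff P = 1 ∧ coeff 1 P = 0 ∧ coeff 2 P = 0 ∧
        P ^ 2 * (X * d⁄dX ℚ P - 2 * P) ^ 2 = 4 * P ^ 5 - 4 * X ^ 10) → P = PP := by
    intro P h
    ext k
    induction k using Nat.strong_induction_on with
    | _ k ih => exact huniq P PP h hPPprop k ih
  refine ⟨⟨PP, hPPprop, fun Q hQ => hext Q hQ⟩, huniq, ?_⟩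
  intro P h
  rw [hext P h]
  refine ⟨fun k h1 h9 => coeff_PP_lowzero k h1 h9, ?_⟩
  rw [coeff_PP_ten]
  norm_num
end
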